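/- If G is a linear 3-graph in which every vertex has degree at most 5, and G is crown-free, then |E(G)| ≤ 3n/2 where n is the number of vertices. In particular the average degree of G is at most 9/2. -/

import Mathlib

open Finset

/-- A linear 3-graph: all edges have 3 vertices and two distinct edges share at most one vertex. -/
def Linear3 {V : Type*} [DecidableEq V] (E : Finset (Finset V)) : Prop :=
  (∀ e ∈ E, e.card = 3) ∧ ∀ e ∈ E, ∀ f ∈ E, e ≠ f → (e ∩ f).card ≤ 1

/-- Degree of a vertex: the number of edges containing it. -/
def deg {V : Type*} [DecidableEq V] (E : Finset (Finset V)) (v : V) : ℕ :=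
  (E.filter fun e => v ∈ e).card

/-- A crown: four edges e = {x,y,z}, e1, e2, e3 with e1,e2,e3 pairwise disjoint and
    ei ∩ e = {x},{y},{z} respectively. -/
def HasCrown {V : Type*} [DecidableEq V] (E : Finset (Finset V)) : Prop :=
  ∃ x y z : V, ∃ e ∈ E, ∃ e1 ∈ E, ∃ e2 ∈ E, ∃ e3 ∈ E,
    x ≠ y ∧ x ≠ z ∧ y ≠ z ∧ e = {x, y, z} ∧
    Disjoint e1 e2 ∧ Disjoint e1 e3 ∧ Disjoint e2 e3 ∧
    e1 ∩ e = {x} ∧ e2 ∩ e = {y} ∧ e3 ∩ e = {z}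

/-- χ(v) = 1 if deg v ≤ 5, else 0. -/
def chi {V : Type*} [DecidableEq V] (E : Finset (Finset V)) (v : V) : ℚ :=
  if deg E v ≤ 5 then 1 else 0

/-- The set of vertices outside {x,y,z} lying on a common edge with p. -/
def nbhd {V : Type*} [DecidableEq V] (E : Finset (Finset V)) (x y z p : V) : Finset V :=
  ((E.filter fun f => p ∈ f).biUnion id) \ {x, y, z}

section CrownProofInternal
variable {V : Type*} [DecidableEq V] {E : Finset (Finset V)}

lemma inter_single (hlin : Linear3 E) {e f : Finset V} (he : e ∈ E) (hf : f ∈ E) (hne : e ≠ f)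
    {v : V} (hv : v ∈ e) (hw : v ∈ f) : e ∩ f = {v} := by
  have h1 : ({v} : Finset V) ⊆ e ∩ f := by simp [Finset.singleton_subset_iff, hv, hw]
  exact (Finset.eq_of_subset_of_card_le h1 (by simpa using hlin.2 e he f hf hne)).symm

lemma common_unique (hlin : Linear3 E) {e f : Finset V} (he : e ∈ E) (hf : f ∈ E)
    {v w : V} (hvw : v ≠ w) (h1 : v ∈ e) (h2 : w ∈ e) (h3 : v ∈ f) (h4 : w ∈ f) : e = f := by
  by_contra hne
  have h := inter_single hlin he hf hne h1 h3
  have h2' : w ∈ ({v} : Finset V) := h ▸ Finset.mem_inter.2 ⟨h2, h4⟩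
  have : w = v := by simpa using h2'
  exact hvw this.symm

lemma third2 (hlin : Linear3 E) {e : Finset V} (he : e ∈ E) {u w : V} (hu : u ∈ e) (hw : w ∈ e) (huw : u ≠ w) :
    ∃ x, x ≠ u ∧ x ≠ w ∧ e = {u, w, x} := by
  have hsub : ({u, w} : Finset V) ⊆ e := by
    intro t ht; simp only [Finset.mem_insert, Finset.mem_singleton] at ht
    rcases ht with rfl | rfl <;> assumption
  have hc : (e \ {u, w}).card = 1 := by
    rw [Finset.card_sdiff_of_subset hsub, hlin.1 e he, Finset.card_insert_of_notMem (by simpa using huw),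
      Finset.card_singleton]
  obtain ⟨x, hx⟩ := Finset.card_eq_one.1 hc
  have hxm : x ∈ e \ {u, w} := hx ▸ Finset.mem_singleton_self x
  simp only [Finset.mem_sdiff, Finset.mem_insert, Finset.mem_singleton] at hxm
  refine ⟨x, fun h => hxm.2 (Or.inl h), fun h => hxm.2 (Or.inr h), ?_⟩
  ext t
  simp only [Finset.mem_insert, Finset.mem_singleton]
  constructor
  · intro ht
    by_cases h1 : t = u; · exact Or.inl h1
    by_cases h2 : t = w; · exact Or.inr (Or.inl h2)
    have : t ∈ e \ {u, w} := Finset.mem_sdiff.2 ⟨ht, by simp [h1, h2]⟩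
    rw [hx] at this; exact Or.inr (Or.inr (by simpa using this))
  · intro ht
    rcases ht with rfl | rfl | rfl
    · exact hu
    · exact hw
    · exact hxm.1

lemma third (hlin : Linear3 E) {e : Finset V} (he : e ∈ E) {v : V} (hv : v ∈ e) :
    ∃ a b, a ≠ v ∧ b ≠ v ∧ a ≠ b ∧ e = {v, a, b} := by
  have hc : (e.erase v).card = 2 := by
    rw [Finset.card_erase_of_mem hv, hlin.1 e he]
  obtain ⟨a, b, hab, hx⟩ := Finset.card_eq_two.1 hc
  have ha : a ∈ e.erase v := hx ▸ (by simp)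
  have hb : b ∈ e.erase v := hx ▸ (by simp [hab])
  obtain ⟨x, hx1, hx2, hx3⟩ := third2 hlin he (Finset.mem_of_mem_erase ha) (Finset.mem_of_mem_erase hb) hab
  have hxv : x = v := by
    by_contra hxv
    have : x ∈ e.erase v := Finset.mem_erase.2 ⟨hxv, by rw [hx3]; simp⟩
    rw [hx] at this
    simp only [Finset.mem_insert, Finset.mem_singleton] at this
    tauto
  refine ⟨a, b, Finset.ne_of_mem_erase ha, Finset.ne_of_mem_erase hb, hab, ?_⟩
  rw [hx3, hxv]
  ext t; simp only [Finset.mem_insert, Finset.mem_singleton]; tauto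

def Nbr (E : Finset (Finset V)) (v : V) : Finset V :=
  (E.filter fun e => v ∈ e).biUnion (fun e => e.erase v)

lemma mem_Nbr {v w : V} : w ∈ Nbr E v ↔ w ≠ v ∧ ∃ e ∈ E, v ∈ e ∧ w ∈ e := by
  simp only [Nbr, Finset.mem_biUnion, Finset.mem_filter, Finset.mem_erase]
  tauto

lemma Nbr_card (hlin : Linear3 E) (v : V) : (Nbr E v).card = 2 * deg E v := by
  rw [Nbr, Finset.card_biUnion]
  · have h : ∀ e ∈ E.filter (fun e => v ∈ e), (e.erase v).card = 2 := by
      intro e he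
      simp only [Finset.mem_filter] at he
      rw [Finset.card_erase_of_mem he.2, hlin.1 e he.1]
    rw [Finset.sum_congr rfl h]
    simp [deg, mul_comm]
  · intro e he f hf hef
    simp only [Finset.mem_coe, Finset.mem_filter] at he hf
    have h := inter_single hlin he.1 hf.1 hef he.2 hf.2
    rw [Function.onFun, Finset.disjoint_left]
    intro x hx hx2
    have hx3 : x ∈ e ∩ f := Finset.mem_inter.2 ⟨Finset.mem_of_mem_erase hx, Finset.mem_of_mem_erase hx2⟩
    rw [h] at hx3
    exact (Finset.ne_of_mem_erase hx) (by simpa using hx3)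

lemma build_crown (hcf : ¬ HasCrown E) {x y z : V} {e e1 e2 e3 : Finset V}
    (he : e ∈ E) (he1 : e1 ∈ E) (he2 : e2 ∈ E) (he3 : e3 ∈ E)
    (hxy : x ≠ y) (hxz : x ≠ z) (hyz : y ≠ z) (hexyz : e = {x, y, z})
    (d12 : e1 ∩ e2 = ∅) (d13 : e1 ∩ e3 = ∅) (d23 : e2 ∩ e3 = ∅)
    (h1 : e1 ∩ e = {x}) (h2 : e2 ∩ e = {y}) (h3 : e3 ∩ e = {z}) : False :=
  hcf ⟨x, y, z, e, he, e1, he1, e2, he2, e3, he3, hxy, hxz, hyz, hexyz,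
    Finset.disjoint_iff_inter_eq_empty.2 d12, Finset.disjoint_iff_inter_eq_empty.2 d13,
    Finset.disjoint_iff_inter_eq_empty.2 d23, h1, h2, h3⟩

/-- at most one edge of E contains both u and w (u ≠ w): filter card ≤ 1 -/
lemma pair_filter_card (hlin : Linear3 E) {u w : V} (huw : u ≠ w) :
    (E.filter fun k => u ∈ k ∧ w ∈ k).card ≤ 1 := by
  apply Finset.card_le_one.2
  intro k1 h1 k2 h2
  simp only [Finset.mem_filter] at h1 h2
  exact common_unique hlin h1.1 h2.1 huw h1.2.1 h1.2.2 h2.2.1 h2.2.2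

/-- Lemma A : confinement. -/
lemma confine (hlin : Linear3 E) (hcf : ¬ HasCrown E)
    {e' g : Finset V} {v p q : V}
    (he' : e' ∈ E) (hv : v ∈ e') (hdv : deg E v = 5)
    (hq : q ∈ e') (hqv : q ≠ v) (hdq : 4 ≤ deg E q)
    (hp : p ∈ e') (hpv : p ≠ v) (hpq : p ≠ q)
    (hg : g ∈ E) (hgp : p ∈ g) (hge : g ≠ e') :
    g ⊆ insert p (Nbr E v \ e') := by
  by_contra hcon
  obtain ⟨s, hsg, hsn⟩ := Finset.not_subset.1 hcon
  simp only [Finset.mem_insert, Finset.mem_sdiff, not_or, not_and_or, not_not] at hsn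
  obtain ⟨hsp, hsn2⟩ := hsn
  have hge' : g ∩ e' = {p} := inter_single hlin hg he' hge hgp hp
  have hse' : s ∉ e' := by
    intro h
    have hh : s ∈ g ∩ e' := Finset.mem_inter.2 ⟨hsg, h⟩
    rw [hge'] at hh; exact hsp (by simpa using hh)
  have hsv : s ≠ v := fun h => hse' (h ▸ hv)
  have hsN : s ∉ Nbr E v := by
    rcases hsn2 with h | h
    · exact h
    · exact absurd h hse'
  have hvs_none : ∀ f ∈ E, v ∈ f → s ∉ f := by
    intro f hf hvf hsf
    exact hsN (mem_Nbr.2 ⟨hsv, f, hf, hvf, hsf⟩)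
  have hvg : v ∉ g := by
    intro h
    have hh : v ∈ g ∩ e' := Finset.mem_inter.2 ⟨h, hv⟩
    rw [hge'] at hh; exact hpv.symm (by simpa using hh)
  have hqg : q ∉ g := by
    intro h
    have hh : q ∈ g ∩ e' := Finset.mem_inter.2 ⟨h, hq⟩
    rw [hge'] at hh; exact hpq.symm (by simpa using hh)
  obtain ⟨t, hts, htp, hgt⟩ := third2 hlin hg hgp hsg (fun h => hsp h.symm)
  have htv : t ≠ v := fun h => hvg (h ▸ (by rw [hgt]; simp))
  have htg : t ∈ g := by rw [hgt]; simp
  -- K : edges at q other than e'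
  have hKcard : 3 ≤ ((E.filter fun k => q ∈ k).erase e').card := by
    rw [Finset.card_erase_of_mem (by simp [Finset.mem_filter, he', hq])]
    have h4 : 4 ≤ (E.filter fun k => q ∈ k).card := hdq
    omega
  have hKbad : (((E.filter fun k => q ∈ k).erase e').filter fun k => ¬ (k ∩ g = ∅)).card ≤ 2 := by
    have hsub : (((E.filter fun k => q ∈ k).erase e').filter fun k => ¬ (k ∩ g = ∅)) ⊆
        (E.filter fun k => q ∈ k ∧ s ∈ k) ∪ (E.filter fun k => q ∈ k ∧ t ∈ k) := by
      intro k hk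
      simp only [Finset.mem_filter, Finset.mem_erase] at hk
      obtain ⟨⟨hke', hkE, hkq⟩, hkg⟩ := hk
      obtain ⟨x, hx⟩ := Finset.nonempty_iff_ne_empty.2 hkg
      have hxk := Finset.mem_inter.1 hx
      have hpk : p ∉ k := fun hpk => hke' (common_unique hlin hkE he' hpq hpk hkq hp hq)
      have hxg : x ∈ g := hxk.2
      rw [hgt] at hxg
      simp only [Finset.mem_insert, Finset.mem_singleton] at hxg
      rcases hxg with rfl | rfl | rfl
      · exact absurd hxk.1 hpk
      · exact Finset.mem_union_left _ (by simp [Finset.mem_filter, hkE, hkq, hxk.1])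
      · exact Finset.mem_union_right _ (by simp [Finset.mem_filter, hkE, hkq, hxk.1])
    calc _ ≤ _ := Finset.card_le_card hsub
      _ ≤ _ := Finset.card_union_le _ _
      _ ≤ 2 := by
          have h1 := pair_filter_card hlin (show q ≠ s from fun h => hse' (h ▸ hq))
          have h2 := pair_filter_card hlin (show q ≠ t from fun h => hqg (h ▸ htg))
          omega
  -- pick k disjoint from g
  have hKex : ∃ k ∈ (E.filter fun k => q ∈ k).erase e', k ∩ g = ∅ := by
    by_contra hno
    push_neg at hno
    have heq : ((E.filter fun k => q ∈ k).erase e').filter (fun k => ¬ (k ∩ g = ∅)) =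
        (E.filter fun k => q ∈ k).erase e' :=
      Finset.filter_true_of_mem (fun k hk => Finset.nonempty_iff_ne_empty.1 (hno k hk))
    rw [heq] at hKbad
    omega
  obtain ⟨k, hkmem, hkg⟩ := hKex
  simp only [Finset.mem_erase, Finset.mem_filter] at hkmem
  obtain ⟨hke', hkE, hqk⟩ := hkmem
  have hvk : v ∉ k := by
    intro h
    have hh : v ∈ k ∩ e' := Finset.mem_inter.2 ⟨h, hv⟩
    rw [inter_single hlin hkE he' hke' hqk hq] at hh
    have hvq : v = q := by simpa using hh
    exact hqv hvq.symm
  obtain ⟨k1, k2, hk1q, hk2q, hk12, hkform⟩ := third hlin hkE hqk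
  have hk1v : k1 ≠ v := fun h => hvk (h ▸ (by rw [hkform]; simp))
  have hk2v : k2 ≠ v := fun h => hvk (h ▸ (by rw [hkform]; simp))
  -- F : edges at v other than e'
  have hFcard : ((E.filter fun f => v ∈ f).erase e').card = 4 := by
    rw [Finset.card_erase_of_mem (by simp [Finset.mem_filter, he', hv])]
    have h5 : (E.filter fun f => v ∈ f).card = 5 := hdv
    omega
  have hFbad : (((E.filter fun f => v ∈ f).erase e').filter
      fun f => ¬ (f ∩ g = ∅) ∨ ¬ (f ∩ k = ∅)).card ≤ 3 := by
    have hsub : (((E.filter fun f => v ∈ f).erase e').filter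
        fun f => ¬ (f ∩ g = ∅) ∨ ¬ (f ∩ k = ∅)) ⊆
        (E.filter fun f => v ∈ f ∧ t ∈ f) ∪
        ((E.filter fun f => v ∈ f ∧ k1 ∈ f) ∪ (E.filter fun f => v ∈ f ∧ k2 ∈ f)) := by
      intro f hf
      simp only [Finset.mem_filter, Finset.mem_erase] at hf
      obtain ⟨⟨hfe', hfE, hvf⟩, hfbad⟩ := hf
      have hpf : p ∉ f := fun hpf => hfe' (common_unique hlin hfE he' (fun h => hpv h.symm) hvf hpf hv hp)
      have hqf : q ∉ f := fun hqf => hfe' (common_unique hlin hfE he' hqv.symm hvf hqf hv hq)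
      rcases hfbad with hbad | hbad
      · obtain ⟨x, hx⟩ := Finset.nonempty_iff_ne_empty.2 hbad
        have hxf := Finset.mem_inter.1 hx
        have hxg : x ∈ g := hxf.2
        rw [hgt] at hxg
        simp only [Finset.mem_insert, Finset.mem_singleton] at hxg
        rcases hxg with rfl | rfl | rfl
        · exact absurd hxf.1 hpf
        · exact absurd hxf.1 (hvs_none f hfE hvf)
        · exact Finset.mem_union_left _ (by simp [Finset.mem_filter, hfE, hvf, hxf.1])
      · obtain ⟨x, hx⟩ := Finset.nonempty_iff_ne_empty.2 hbad
        have hxf := Finset.mem_inter.1 hx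
        have hxk : x ∈ k := hxf.2
        rw [hkform] at hxk
        simp only [Finset.mem_insert, Finset.mem_singleton] at hxk
        rcases hxk with rfl | rfl | rfl
        · exact absurd hxf.1 hqf
        · exact Finset.mem_union_right _ (Finset.mem_union_left _
            (by simp [Finset.mem_filter, hfE, hvf, hxf.1]))
        · exact Finset.mem_union_right _ (Finset.mem_union_right _
            (by simp [Finset.mem_filter, hfE, hvf, hxf.1]))
    calc _ ≤ _ := Finset.card_le_card hsub
      _ ≤ _ := Finset.card_union_le _ _
      _ ≤ 3 := by
          have h1 := pair_filter_card hlin (show v ≠ t from fun h => htv h.symm)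
          have h2 := pair_filter_card hlin (show v ≠ k1 from fun h => hk1v h.symm)
          have h3 := pair_filter_card hlin (show v ≠ k2 from fun h => hk2v h.symm)
          have h4 := Finset.card_union_le (E.filter fun f => v ∈ f ∧ k1 ∈ f)
            (E.filter fun f => v ∈ f ∧ k2 ∈ f)
          omega
  have hFex : ∃ f ∈ (E.filter fun f => v ∈ f).erase e', (f ∩ g = ∅) ∧ (f ∩ k = ∅) := by
    by_contra hno
    push_neg at hno
    have heq : (((E.filter fun f => v ∈ f).erase e').filter
        fun f => ¬ (f ∩ g = ∅) ∨ ¬ (f ∩ k = ∅)) = (E.filter fun f => v ∈ f).erase e' := by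
      apply Finset.filter_true_of_mem
      intro f hf
      by_cases h1 : f ∩ g = ∅
      · exact Or.inr (Finset.nonempty_iff_ne_empty.1 (hno f hf h1))
      · exact Or.inl h1
    rw [heq] at hFbad
    omega
  obtain ⟨f, hfmem, hfg, hfk⟩ := hFex
  simp only [Finset.mem_erase, Finset.mem_filter] at hfmem
  obtain ⟨hfe', hfE, hvf⟩ := hfmem
  -- build the crown with center e' = {v, p, q}
  have he'form : e' = {v, p, q} := by
    have hsub : ({v, p, q} : Finset V) ⊆ e' := by
      intro x hx
      simp only [Finset.mem_insert, Finset.mem_singleton] at hx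
      rcases hx with rfl | rfl | rfl <;> assumption
    refine (Finset.eq_of_subset_of_card_le hsub ?_).symm
    rw [hlin.1 e' he']
    calc (3:ℕ) = ({v, p, q} : Finset V).card := by
          rw [Finset.card_insert_of_notMem (by simp [hpv.symm, hqv.symm]),
            Finset.card_insert_of_notMem (by simp [hpq]), Finset.card_singleton]
      _ ≤ _ := le_refl _
  exact build_crown hcf he' hfE hg hkE (fun h => hpv h.symm) (fun h => hqv h.symm) hpq he'form
    hfg hfk (by rw [Finset.inter_comm]; exact hkg)
    (inter_single hlin hfE he' hfe' hvf hv)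
    hge' (inter_single hlin hkE he' hke' hqk hq)

lemma triple_disj {x1 x2 x3 y1 y2 y3 : V}
    (h11 : x1 ≠ y1) (h12 : x1 ≠ y2) (h13 : x1 ≠ y3)
    (h21 : x2 ≠ y1) (h22 : x2 ≠ y2) (h23 : x2 ≠ y3)
    (h31 : x3 ≠ y1) (h32 : x3 ≠ y2) (h33 : x3 ≠ y3) :
    ({x1, x2, x3} : Finset V) ∩ {y1, y2, y3} = ∅ := by
  ext t
  simp only [Finset.mem_inter, Finset.mem_insert, Finset.mem_singleton, Finset.notMem_empty,
    iff_false, not_and]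
  rintro (rfl | rfl | rfl) <;> simp_all

lemma mem_triple {x y z t : V} : t ∈ ({x, y, z} : Finset V) ↔ t = x ∨ t = y ∨ t = z := by
  simp [Finset.mem_insert]


lemma pair_card_le {α : Type*} [DecidableEq α] (x y : α) : ({x, y} : Finset α).card ≤ 2 := by
  by_cases h : x = y
  · subst h; simp
  · rw [Finset.card_insert_of_notMem (by simpa using h)]; simp

lemma sdiff_card_ge {α : Type*} [DecidableEq α] (s t : Finset α) : s.card - t.card ≤ (s \ t).card := by
  have h1 := Finset.card_sdiff_add_card s t
  have h2 : s.card ≤ (s ∪ t).card := Finset.card_le_card Finset.subset_union_left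
  omega


lemma endgame (hlin : Linear3 E) (hcf : ¬ HasCrown E)
    {v a b α β γ δ : V} {e g1 HA HG : Finset V} {Wc : Finset V} {pc : V → V}
    (he : e ∈ E) (hee : e = {v, a, b}) (hva : v ≠ a) (hvb : v ≠ b) (hab : a ≠ b)
    (hdv : deg E v = 5)
    (hg1 : g1 ∈ E) (hg1e : g1 = {a, α, γ})
    (hHA : HA ∈ E) (hHAe : HA = {b, α, δ})
    (hHG : HG ∈ E) (hHGe : HG = {b, γ, β})
    (hfg : ({v, γ, δ} : Finset V) ∈ E)
    (hfa : ({v, α, β} : Finset V) ∈ E)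
    (hαW : α ∈ Nbr E v \ e) (hβW : β ∈ Nbr E v \ e)
    (hγW : γ ∈ Nbr E v \ e) (hδW : δ ∈ Nbr E v \ e)
    (hWc : Wc ⊆ Nbr E v \ e) (hWc4 : Wc.card = 4)
    (hαWc : α ∉ Wc) (hβWc : β ∉ Wc) (hγWc : γ ∉ Wc) (hδWc : δ ∉ Wc)
    (hαβ : α ≠ β) (hαγ : α ≠ γ) (hαδ : α ≠ δ) (hβγ : β ≠ γ) (hβδ : β ≠ δ) (hγδ : γ ≠ δ)
    (hpc : ∀ z ∈ Wc, pc z ∈ Wc ∧ pc z ≠ z ∧ pc (pc z) = z ∧ ({v, z, pc z} : Finset V) ∈ E)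
    (Hcov : ∀ z ∈ Wc, ∃ h ∈ E, b ∈ h ∧ z ∈ h ∧ (∀ w ∈ Wc, w ∈ h ∨ pc w ∈ h))
    (hWdec : ∀ w ∈ Nbr E v \ e, w = α ∨ w = β ∨ w = γ ∨ w = δ ∨ w ∈ Wc)
    (hdγ : 4 ≤ deg E γ) (hdδ : 4 ≤ deg E δ) : False := by
  have hWfact : ∀ w ∈ Nbr E v \ e, w ≠ v ∧ w ≠ a ∧ w ≠ b ∧ w ∉ e := by
    intro w hw
    obtain ⟨hw1, hw2⟩ := Finset.mem_sdiff.1 hw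
    have hwv := (mem_Nbr.1 hw1).1
    refine ⟨hwv, ?_, ?_, hw2⟩
    · intro h; subst h; exact hw2 (by rw [hee]; simp)
    · intro h; subst h; exact hw2 (by rw [hee]; simp)
  obtain ⟨hαv, hαa, hαb, hαe⟩ := hWfact α hαW
  obtain ⟨hβv, hβa, hβb, hβe⟩ := hWfact β hβW
  obtain ⟨hγv, hγa, hγb, hγe⟩ := hWfact γ hγW
  obtain ⟨hδv, hδa, hδb, hδe⟩ := hWfact δ hδW
  have hWcfact : ∀ z ∈ Wc, z ≠ v ∧ z ≠ a ∧ z ≠ b ∧ z ∉ e ∧ z ≠ α ∧ z ≠ β ∧ z ≠ γ ∧ z ≠ δ := by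
    intro z hz
    obtain ⟨h1, h2, h3, h4⟩ := hWfact z (hWc hz)
    exact ⟨h1, h2, h3, h4, fun h => hαWc (h ▸ hz), fun h => hβWc (h ▸ hz),
      fun h => hγWc (h ▸ hz), fun h => hδWc (h ▸ hz)⟩
  have hvg1 : v ∉ g1 := by rw [hg1e, mem_triple]; push_neg; exact ⟨hva, hαv.symm, hγv.symm⟩
  have hvHA : v ∉ HA := by rw [hHAe, mem_triple]; push_neg; exact ⟨hvb, hαv.symm, hδv.symm⟩
  have hvHG : v ∉ HG := by rw [hHGe, mem_triple]; push_neg; exact ⟨hvb, hγv.symm, hβv.symm⟩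
  -- m' : a fourth edge at γ
  have hm'ex : ∃ m', m' ∈ E ∧ γ ∈ m' ∧ m' ≠ ({v, γ, δ} : Finset V) ∧ m' ≠ g1 ∧ m' ≠ HG := by
    have h1 : 4 ≤ (E.filter fun k => γ ∈ k).card := hdγ
    have h2 := sdiff_card_ge (E.filter fun k => γ ∈ k) {({v, γ, δ} : Finset V), g1, HG}
    have h3 : ({({v, γ, δ} : Finset V), g1, HG} : Finset (Finset V)).card ≤ 3 := by
      refine (Finset.card_insert_le _ _).trans ?_
      have := pair_card_le (α := Finset V) g1 HG
      omega
    have h4 : 0 < ((E.filter fun k => γ ∈ k) \ {({v, γ, δ} : Finset V), g1, HG}).card := by omega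
    obtain ⟨m', hm'⟩ := Finset.card_pos.1 h4
    obtain ⟨hm1, hm2⟩ := Finset.mem_sdiff.1 hm'
    simp only [Finset.mem_insert, Finset.mem_singleton, not_or] at hm2
    simp only [Finset.mem_filter] at hm1
    exact ⟨m', hm1.1, hm1.2, hm2.1, hm2.2.1, hm2.2.2⟩
  obtain ⟨m', hm'E, hγm', hm'fγ, hm'g1, hm'HG⟩ := hm'ex
  have hm'sub : m' ⊆ insert γ (Nbr E v \ {v, γ, δ}) :=
    confine hlin hcf hfg (by simp) hdv (by simp) hδv hdδ (by simp) hγv hγδ hm'E hγm' hm'fγ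
  have hvm' : v ∉ m' := by
    intro h
    rcases Finset.mem_insert.1 (hm'sub h) with h1 | h1
    · exact hγv h1.symm
    · exact absurd (by simp : v ∈ ({v, γ, δ} : Finset V)) (Finset.mem_sdiff.1 h1).2
  have ham' : a ∉ m' := by
    intro h
    have hag1 : a ∈ g1 := by rw [hg1e]; simp
    have hγg1 : γ ∈ g1 := by rw [hg1e]; simp
    have hh : a ∈ m' ∩ g1 := Finset.mem_inter.2 ⟨h, hag1⟩
    rw [inter_single hlin hm'E hg1 hm'g1 hγm' hγg1] at hh
    have hh2 : a = γ := by simpa using hh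
    exact hγa hh2.symm
  have hbm' : b ∉ m' := by
    intro h
    have hbHG : b ∈ HG := by rw [hHGe]; simp
    have hγHG : γ ∈ HG := by rw [hHGe]; simp
    have hh : b ∈ m' ∩ HG := Finset.mem_inter.2 ⟨h, hbHG⟩
    rw [inter_single hlin hm'E hHG hm'HG hγm' hγHG] at hh
    have hh2 : b = γ := by simpa using hh
    exact hγb hh2.symm
  have hαm' : α ∉ m' := by
    intro h
    have hαg1 : α ∈ g1 := by rw [hg1e]; simp
    have hγg1 : γ ∈ g1 := by rw [hg1e]; simp
    have hh : α ∈ m' ∩ g1 := Finset.mem_inter.2 ⟨h, hαg1⟩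
    rw [inter_single hlin hm'E hg1 hm'g1 hγm' hγg1] at hh
    exact hαγ (by simpa using hh)
  have hm'elem : ∀ w ∈ m', w ≠ γ → w ∈ Wc ∨ w = β := by
    intro w hw hwγ
    have hw1 := hm'sub hw
    rcases Finset.mem_insert.1 hw1 with h1 | h1
    · exact absurd h1 hwγ
    obtain ⟨hwN, hwfγ⟩ := Finset.mem_sdiff.1 h1
    have hwv : w ≠ v := (mem_Nbr.1 hwN).1
    have hwδ : w ≠ δ := fun h => hwfγ (by rw [h, mem_triple]; tauto)
    have hwa : w ≠ a := fun h => ham' (h ▸ hw)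
    have hwb : w ≠ b := fun h => hbm' (h ▸ hw)
    have hwα : w ≠ α := fun h => hαm' (h ▸ hw)
    have hwe : w ∉ e := by rw [hee, mem_triple]; push_neg; exact ⟨hwv, hwa, hwb⟩
    have hwW : w ∈ Nbr E v \ e := Finset.mem_sdiff.2 ⟨hwN, hwe⟩
    rcases hWdec w hwW with h | h | h | h | h
    · exact absurd h hwα
    · exact Or.inr h
    · exact absurd h hwγ
    · exact absurd h hwδ
    · exact Or.inl h
  -- β ∉ m' via crown
  have hβm' : β ∉ m' := by
    intro hβm'
    obtain ⟨w0, hw0γ, hw0β, hm'form⟩ := third2 hlin hm'E hγm' hβm' (fun h => hβγ h.symm)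
    have hw0Wc : w0 ∈ Wc := by
      rcases hm'elem w0 (by rw [hm'form]; simp) hw0γ with h | h
      · exact h
      · exact absurd h hw0β
    obtain ⟨hw0v, hw0a, hw0b, hw0e, hw0α, hw0β', hw0γ', hw0δ⟩ := hWcfact w0 hw0Wc
    have hex : ∃ w'', w'' ∈ Wc ∧ w'' ≠ w0 ∧ w'' ≠ pc w0 := by
      have h2 := sdiff_card_ge Wc ({w0, pc w0} : Finset V)
      have h3 := pair_card_le w0 (pc w0)
      have h4 : 0 < (Wc \ {w0, pc w0}).card := by omega
      obtain ⟨w'', hw''⟩ := Finset.card_pos.1 h4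
      obtain ⟨h5, h6⟩ := Finset.mem_sdiff.1 hw''
      simp only [Finset.mem_insert, Finset.mem_singleton, not_or] at h6
      exact ⟨w'', h5, h6.1, h6.2⟩
    obtain ⟨w'', hw''Wc, hw''w0, hw''pw0⟩ := hex
    obtain ⟨hpw''Wc, hpw''ne, hpw''inv, hfw''E⟩ := hpc w'' hw''Wc
    obtain ⟨hw''v, hw''a, hw''b, hw''e, hw''α, hw''β, hw''γ, hw''δ⟩ := hWcfact w'' hw''Wc
    obtain ⟨hpw''v, hpw''a, hpw''b, hpw''e, hpw''α, hpw''β, hpw''γ, hpw''δ⟩ := hWcfact (pc w'') hpw''Wc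
    have hpw''w0 : pc w'' ≠ w0 := by
      intro h; apply hw''pw0; rw [← h, hpw''inv]
    have i1 : ({v, w'', pc w''} : Finset V) ∩ ({v, α, β} : Finset V) = {v} := by
      apply inter_single hlin hfw''E hfa ?_ (show v ∈ ({v, w'', pc w''} : Finset V) by simp)
        (show v ∈ ({v, α, β} : Finset V) by simp)
      intro h
      have hh : α ∈ ({v, w'', pc w''} : Finset V) := by rw [h]; simp
      rw [mem_triple] at hh
      rcases hh with h1 | h1 | h1
      · exact hαv h1
      · exact hw''α h1.symm
      · exact hpw''α h1.symm
    have i2 : HA ∩ ({v, α, β} : Finset V) = {α} := by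
      apply inter_single hlin hHA hfa ?_ (show α ∈ HA by rw [hHAe]; simp)
        (show α ∈ ({v, α, β} : Finset V) by simp)
      intro h; exact hvHA (by rw [h]; simp)
    have i3 : m' ∩ ({v, α, β} : Finset V) = {β} := by
      apply inter_single hlin hm'E hfa ?_ hβm'
        (show β ∈ ({v, α, β} : Finset V) by simp)
      intro h; exact hvm' (by rw [h]; simp)
    apply build_crown hcf hfa hfw''E hHA hm'E hαv.symm hβv.symm hαβ rfl ?_ ?_ ?_ i1 i2 i3
    · rw [hHAe]
      exact triple_disj hvb hαv.symm hδv.symm hw''b hw''α hw''δ hpw''b hpw''α hpw''δ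
    · rw [hm'form]
      exact triple_disj hγv.symm hβv.symm hw0v.symm hw''γ hw''β hw''w0 hpw''γ hpw''β hpw''w0
    · rw [hHAe, hm'form]
      exact triple_disj hγb.symm hβb.symm hw0b.symm hαγ hαβ (fun h => hw0α h.symm)
        (fun h => hγδ h.symm) (fun h => hβδ h.symm) (fun h => hw0δ h.symm)
  -- final form of m'
  obtain ⟨z1, z2, hz1γ, hz2γ, hz12, hm'form⟩ := third hlin hm'E hγm'
  have hz1m' : z1 ∈ m' := by rw [hm'form]; simp
  have hz2m' : z2 ∈ m' := by rw [hm'form]; simp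
  have hz1Wc : z1 ∈ Wc := (hm'elem z1 hz1m' hz1γ).resolve_right (fun h => hβm' (h ▸ hz1m'))
  have hz2Wc : z2 ∈ Wc := (hm'elem z2 hz2m' hz2γ).resolve_right (fun h => hβm' (h ▸ hz2m'))
  have hz2pz1 : z2 ≠ pc z1 := by
    intro h
    obtain ⟨hpWc, hpne, hpinv, hfE⟩ := hpc z1 hz1Wc
    have hne : m' ≠ ({v, z1, pc z1} : Finset V) := fun hh => hvm' (by rw [hh]; simp)
    have hint := inter_single hlin hm'E hfE hne hz1m'
      (show z1 ∈ ({v, z1, pc z1} : Finset V) by simp)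
    have hmem : z2 ∈ m' ∩ ({v, z1, pc z1} : Finset V) :=
      Finset.mem_inter.2 ⟨hz2m', by rw [h]; simp⟩
    rw [hint] at hmem
    have hmem2 : z2 = z1 := by simpa using hmem
    exact hz12 hmem2.symm
  have hz1pz2 : z1 ≠ pc z2 := by
    intro h
    obtain ⟨hpWc, hpne, hpinv, hfE⟩ := hpc z2 hz2Wc
    apply hz2pz1
    rw [h, hpinv]
  -- n' : a fourth edge at δ avoiding a and β
  have hCδmem : ∀ c ∈ (E.filter fun k => δ ∈ k) \ {({v, γ, δ} : Finset V), HA},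
      c ∈ E ∧ δ ∈ c ∧ c ≠ ({v, γ, δ} : Finset V) ∧ c ≠ HA := by
    intro c hc
    obtain ⟨h1, h2⟩ := Finset.mem_sdiff.1 hc
    simp only [Finset.mem_insert, Finset.mem_singleton, not_or] at h2
    simp only [Finset.mem_filter] at h1
    exact ⟨h1.1, h1.2, h2.1, h2.2⟩
  -- generic facts for candidates at δ
  have hCδfacts : ∀ c, c ∈ E → δ ∈ c → c ≠ ({v, γ, δ} : Finset V) → c ≠ HA →
      v ∉ c ∧ γ ∉ c ∧ b ∉ c ∧ α ∉ c := by
    intro c hcE hδc hcfγ hcHA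
    have hcsub : c ⊆ insert δ (Nbr E v \ {v, γ, δ}) :=
      confine hlin hcf hfg (by simp) hdv (by simp) hγv hdγ (by simp) hδv
        (fun h => hγδ h.symm) hcE hδc hcfγ
    have hvc : v ∉ c := by
      intro h
      rcases Finset.mem_insert.1 (hcsub h) with h1 | h1
      · exact hδv h1.symm
      · exact absurd (by simp : v ∈ ({v, γ, δ} : Finset V)) (Finset.mem_sdiff.1 h1).2
    have hγc : γ ∉ c := by
      intro h
      rcases Finset.mem_insert.1 (hcsub h) with h1 | h1
      · exact hγδ h1
      · exact absurd (by simp : γ ∈ ({v, γ, δ} : Finset V)) (Finset.mem_sdiff.1 h1).2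
    have hδHA : δ ∈ HA := by rw [hHAe]; simp
    have hbc : b ∉ c := by
      intro h
      have hh : b ∈ c ∩ HA := Finset.mem_inter.2 ⟨h, by rw [hHAe]; simp⟩
      rw [inter_single hlin hcE hHA hcHA hδc hδHA] at hh
      have hh2 : b = δ := by simpa using hh
      exact hδb hh2.symm
    have hαc : α ∉ c := by
      intro h
      have hh : α ∈ c ∩ HA := Finset.mem_inter.2 ⟨h, by rw [hHAe]; simp⟩
      rw [inter_single hlin hcE hHA hcHA hδc hδHA] at hh
      exact hαδ (by simpa using hh)
    exact ⟨hvc, hγc, hbc, hαc⟩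
  have hCδelem : ∀ c, c ∈ E → δ ∈ c → c ≠ ({v, γ, δ} : Finset V) → c ≠ HA →
      ∀ w ∈ c, w ≠ δ → w ∈ Wc ∨ w = β ∨ w = a := by
    intro c hcE hδc hcfγ hcHA w hw hwδ
    obtain ⟨hvc, hγc, hbc, hαc⟩ := hCδfacts c hcE hδc hcfγ hcHA
    have hcsub : c ⊆ insert δ (Nbr E v \ {v, γ, δ}) :=
      confine hlin hcf hfg (by simp) hdv (by simp) hγv hdγ (by simp) hδv
        (fun h => hγδ h.symm) hcE hδc hcfγ
    rcases Finset.mem_insert.1 (hcsub hw) with h1 | h1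
    · exact absurd h1 hwδ
    obtain ⟨hwN, hwfγ⟩ := Finset.mem_sdiff.1 h1
    have hwv : w ≠ v := (mem_Nbr.1 hwN).1
    have hwγ : w ≠ γ := fun h => hγc (h ▸ hw)
    have hwb : w ≠ b := fun h => hbc (h ▸ hw)
    have hwα : w ≠ α := fun h => hαc (h ▸ hw)
    by_cases hwa : w = a
    · exact Or.inr (Or.inr hwa)
    have hwe : w ∉ e := by rw [hee, mem_triple]; push_neg; exact ⟨hwv, hwa, hwb⟩
    have hwW : w ∈ Nbr E v \ e := Finset.mem_sdiff.2 ⟨hwN, hwe⟩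
    rcases hWdec w hwW with h | h | h | h | h
    · exact absurd h hwα
    · exact Or.inr (Or.inl h)
    · exact absurd h hwγ
    · exact absurd h hwδ
    · exact Or.inl h
  have hn'ex : ∃ n', n' ∈ E ∧ δ ∈ n' ∧ n' ≠ ({v, γ, δ} : Finset V) ∧ n' ≠ HA ∧
      a ∉ n' ∧ β ∉ n' := by
    by_contra hno
    push_neg at hno
    -- every candidate contains a or β; get two distinct candidates
    have hCδcard : 2 ≤ ((E.filter fun k => δ ∈ k) \ {({v, γ, δ} : Finset V), HA}).card := by
      have h1 : 4 ≤ (E.filter fun k => δ ∈ k).card := hdδ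
      have h2 := sdiff_card_ge (E.filter fun k => δ ∈ k) {({v, γ, δ} : Finset V), HA}
      have h3 := pair_card_le (α := Finset V) ({v, γ, δ} : Finset V) HA
      omega
    have hCδcard1 : 1 < ((E.filter fun k => δ ∈ k) \ {({v, γ, δ} : Finset V), HA}).card := by
      omega
    obtain ⟨c1, hc1, c2, hc2, hc12⟩ := Finset.one_lt_card.1 hCδcard1
    obtain ⟨hc1E, hδc1, hc1fγ, hc1HA⟩ := hCδmem c1 hc1
    obtain ⟨hc2E, hδc2, hc2fγ, hc2HA⟩ := hCδmem c2 hc2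
    -- find n2 with δ, β ∈ n2 and a ∉ n2
    have key : ∃ n2, n2 ∈ E ∧ δ ∈ n2 ∧ n2 ≠ ({v, γ, δ} : Finset V) ∧ n2 ≠ HA ∧
        β ∈ n2 ∧ a ∉ n2 := by
      have h1 := hno c1 hc1E hδc1 hc1fγ hc1HA
      have h2 := hno c2 hc2E hδc2 hc2fγ hc2HA
      by_cases ha1 : a ∈ c1
      · by_cases ha2 : a ∈ c2
        · exact absurd (common_unique hlin hc1E hc2E (show a ≠ δ from fun h => hδa h.symm)
            ha1 hδc1 ha2 hδc2) hc12
        · exact ⟨c2, hc2E, hδc2, hc2fγ, hc2HA, h2 ha2, ha2⟩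
      · exact ⟨c1, hc1E, hδc1, hc1fγ, hc1HA, h1 ha1, ha1⟩
    obtain ⟨n2, hn2E, hδn2, hn2fγ, hn2HA, hβn2, han2⟩ := key
    -- n2 = {δ, β, w0}, w0 ∈ Wc
    obtain ⟨w0, hw0δ, hw0β, hn2form⟩ := third2 hlin hn2E hδn2 hβn2 (fun h => hβδ h.symm)
    have hw0n2 : w0 ∈ n2 := by rw [hn2form]; simp
    have hw0Wc : w0 ∈ Wc := by
      rcases hCδelem n2 hn2E hδn2 hn2fγ hn2HA w0 hw0n2 hw0δ with h | h | h
      · exact h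
      · exact absurd h hw0β
      · exact absurd (h ▸ hw0n2) han2
    obtain ⟨hw0v, hw0a, hw0b, hw0e, hw0α, hw0β', hw0γ', hw0δ'⟩ := hWcfact w0 hw0Wc
    -- pick w'' in Wc away from w0, pc w0
    have hex : ∃ w'', w'' ∈ Wc ∧ w'' ≠ w0 ∧ w'' ≠ pc w0 := by
      have h2 := sdiff_card_ge Wc ({w0, pc w0} : Finset V)
      have h3 := pair_card_le w0 (pc w0)
      have h4 : 0 < (Wc \ {w0, pc w0}).card := by omega
      obtain ⟨w'', hw''⟩ := Finset.card_pos.1 h4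
      obtain ⟨h5, h6⟩ := Finset.mem_sdiff.1 hw''
      simp only [Finset.mem_insert, Finset.mem_singleton, not_or] at h6
      exact ⟨w'', h5, h6.1, h6.2⟩
    obtain ⟨w'', hw''Wc, hw''w0, hw''pw0⟩ := hex
    obtain ⟨hpw''Wc, hpw''ne, hpw''inv, hfw''E⟩ := hpc w'' hw''Wc
    obtain ⟨hw''v, hw''a, hw''b, hw''e, hw''α, hw''β, hw''γ, hw''δ⟩ := hWcfact w'' hw''Wc
    obtain ⟨hpw''v, hpw''a, hpw''b, hpw''e, hpw''α, hpw''β, hpw''γ, hpw''δ⟩ :=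
      hWcfact (pc w'') hpw''Wc
    have hpw''w0 : pc w'' ≠ w0 := by
      intro h; apply hw''pw0; rw [← h, hpw''inv]
    -- crown at fα = {v,α,β} with e1 = {v,w'',pc w''}, e2 = g1 at α, e3 = n2 at β
    have i1 : ({v, w'', pc w''} : Finset V) ∩ ({v, α, β} : Finset V) = {v} := by
      apply inter_single hlin hfw''E hfa ?_ (show v ∈ ({v, w'', pc w''} : Finset V) by simp)
        (show v ∈ ({v, α, β} : Finset V) by simp)
      intro h
      have hh : α ∈ ({v, w'', pc w''} : Finset V) := by rw [h]; simp
      rw [mem_triple] at hh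
      rcases hh with h1 | h1 | h1
      · exact hαv h1
      · exact hw''α h1.symm
      · exact hpw''α h1.symm
    have i2 : g1 ∩ ({v, α, β} : Finset V) = {α} := by
      apply inter_single hlin hg1 hfa ?_ (show α ∈ g1 by rw [hg1e]; simp)
        (show α ∈ ({v, α, β} : Finset V) by simp)
      intro h; exact hvg1 (by rw [h]; simp)
    have i3 : n2 ∩ ({v, α, β} : Finset V) = {β} := by
      apply inter_single hlin hn2E hfa ?_ hβn2
        (show β ∈ ({v, α, β} : Finset V) by simp)
      intro h
      exact (hCδfacts n2 hn2E hδn2 hn2fγ hn2HA).1 (by rw [h]; simp)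
    apply build_crown hcf hfa hfw''E hg1 hn2E hαv.symm hβv.symm hαβ rfl ?_ ?_ ?_ i1 i2 i3
    · rw [hg1e]
      exact triple_disj hva hαv.symm hγv.symm hw''a hw''α hw''γ hpw''a hpw''α hpw''γ
    · rw [hn2form]
      exact triple_disj hδv.symm hβv.symm hw0v.symm hw''δ hw''β hw''w0 hpw''δ hpw''β hpw''w0
    · rw [hg1e, hn2form]
      exact triple_disj (fun h => hδa h.symm) (fun h => hβa h.symm) (fun h => hw0a h.symm)
        hαδ hαβ (fun h => hw0α h.symm) hγδ hβγ.symm (fun h => hw0γ' h.symm)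
  obtain ⟨n', hn'E, hδn', hn'fγ, hn'HA, han', hβn'⟩ := hn'ex
  obtain ⟨hvn', hγn', hbn', hαn'⟩ := hCδfacts n' hn'E hδn' hn'fγ hn'HA
  obtain ⟨y1, y2, hy1δ, hy2δ, hy12, hn'form⟩ := third hlin hn'E hδn'
  have hy1n' : y1 ∈ n' := by rw [hn'form]; simp
  have hy2n' : y2 ∈ n' := by rw [hn'form]; simp
  have hy1Wc : y1 ∈ Wc := by
    rcases hCδelem n' hn'E hδn' hn'fγ hn'HA y1 hy1n' hy1δ with h | h | h
    · exact h
    · exact absurd (h ▸ hy1n') hβn'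
    · exact absurd (h ▸ hy1n') han'
  have hy2Wc : y2 ∈ Wc := by
    rcases hCδelem n' hn'E hδn' hn'fγ hn'HA y2 hy2n' hy2δ with h | h | h
    · exact h
    · exact absurd (h ▸ hy2n') hβn'
    · exact absurd (h ▸ hy2n') han'
  have hy2py1 : y2 ≠ pc y1 := by
    intro h
    obtain ⟨hpWc, hpne, hpinv, hfE⟩ := hpc y1 hy1Wc
    have hne : n' ≠ ({v, y1, pc y1} : Finset V) := fun hh => hvn' (by rw [hh]; simp)
    have hint := inter_single hlin hn'E hfE hne hy1n'
      (show y1 ∈ ({v, y1, pc y1} : Finset V) by simp)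
    have hmem : y2 ∈ n' ∩ ({v, y1, pc y1} : Finset V) :=
      Finset.mem_inter.2 ⟨hy2n', by rw [h]; simp⟩
    rw [hint] at hmem
    have hmem2 : y2 = y1 := by simpa using hmem
    exact hy12 hmem2.symm
  have hy1py2 : y1 ≠ pc y2 := by
    intro h
    obtain ⟨hpWc, hpne, hpinv, hfE⟩ := hpc y2 hy2Wc
    apply hy2py1; rw [h, hpinv]
  -- m' ∩ n' nonempty
  obtain ⟨hz1v, hz1a, hz1b, hz1e, hz1α, hz1β, hz1γ', hz1δ⟩ := hWcfact z1 hz1Wc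
  obtain ⟨hz2v, hz2a, hz2b, hz2e, hz2α, hz2β, hz2γ', hz2δ⟩ := hWcfact z2 hz2Wc
  obtain ⟨hy1v, hy1a, hy1b, hy1e, hy1α, hy1β, hy1γ, hy1δ'⟩ := hWcfact y1 hy1Wc
  obtain ⟨hy2v, hy2a, hy2b, hy2e, hy2α, hy2β, hy2γ, hy2δ'⟩ := hWcfact y2 hy2Wc
  have hefγ : e ≠ ({v, γ, δ} : Finset V) := fun h => hγe (by rw [h]; simp)
  have hmn : ¬ (m' ∩ n' = ∅) := by
    intro hdisj
    apply build_crown hcf hfg he hm'E hn'E hγv.symm hδv.symm hγδ rfl ?_ ?_ hdisj ?_ ?_ ?_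
    · rw [hee, hm'form]
      exact triple_disj hγv.symm hz1v.symm hz2v.symm (fun h => hγa h.symm)
        (fun h => hz1a h.symm) (fun h => hz2a h.symm) (fun h => hγb h.symm)
        (fun h => hz1b h.symm) (fun h => hz2b h.symm)
    · rw [hee, hn'form]
      exact triple_disj hδv.symm hy1v.symm hy2v.symm (fun h => hδa h.symm)
        (fun h => hy1a h.symm) (fun h => hy2a h.symm) (fun h => hδb h.symm)
        (fun h => hy1b h.symm) (fun h => hy2b h.symm)
    · exact inter_single hlin he hfg hefγ (by rw [hee]; simp) (by simp)
    · exact inter_single hlin hm'E hfg hm'fγ hγm' (by simp)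
    · exact inter_single hlin hn'E hfg hn'fγ hδn' (by simp)
  obtain ⟨zs, hzs⟩ := Finset.nonempty_iff_ne_empty.2 hmn
  have hzsm' := (Finset.mem_inter.1 hzs).1
  have hzsn' := (Finset.mem_inter.1 hzs).2
  have hγn'2 : γ ∉ n' := hγn'
  have hm'n' : m' ≠ n' := fun h => hγn'2 (h ▸ hγm')
  have hint : m' ∩ n' = {zs} := inter_single hlin hm'E hn'E hm'n' hzsm' hzsn'
  have hzsγ : zs ≠ γ := fun h => hγn'2 (h ▸ hzsn')
  have hzsδ : zs ≠ δ := by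
    intro h
    have : δ ∈ m' := h ▸ hzsm'
    rcases hm'elem δ this (fun hh => hγδ hh.symm) with h1 | h1
    · exact hδWc h1
    · exact hβδ h1.symm
  -- s : the other element of m'
  have hzs12 : zs = z1 ∨ zs = z2 := by
    have := hzsm'
    rw [hm'form, mem_triple] at this
    rcases this with h | h | h
    · exact absurd h hzsγ
    · exact Or.inl h
    · exact Or.inr h
  have hzsWc : zs ∈ Wc := by rcases hzs12 with rfl | rfl; exacts [hz1Wc, hz2Wc]
  obtain ⟨s, hsm', hsWc, hszs, hspzs⟩ : ∃ s, s ∈ m' ∧ s ∈ Wc ∧ s ≠ zs ∧ s ≠ pc zs := by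
    rcases hzs12 with rfl | rfl
    · exact ⟨z2, hz2m', hz2Wc, fun h => hz12 h.symm, hz2pz1⟩
    · exact ⟨z1, hz1m', hz1Wc, hz12, hz1pz2⟩
  obtain ⟨s', hs'n', hs'Wc, hs'zs, hs'pzs⟩ : ∃ s', s' ∈ n' ∧ s' ∈ Wc ∧ s' ≠ zs ∧ s' ≠ pc zs := by
    have hzs12' : zs = y1 ∨ zs = y2 := by
      have := hzsn'
      rw [hn'form, mem_triple] at this
      rcases this with h | h | h
      · exact absurd h hzsδ
      · exact Or.inl h
      · exact Or.inr h
    rcases hzs12' with rfl | rfl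
    · exact ⟨y2, hy2n', hy2Wc, fun h => hy12 h.symm, hy2py1⟩
    · exact ⟨y1, hy1n', hy1Wc, hy12, hy1py2⟩
  have hsn' : s ∉ n' := by
    intro h
    have : s ∈ m' ∩ n' := Finset.mem_inter.2 ⟨hsm', h⟩
    rw [hint] at this
    exact hszs (by simpa using this)
  have hs's : s' ≠ s := fun h => hsn' (h ▸ hs'n')
  obtain ⟨hpzsWc, hpzsne, hpzsinv, _⟩ := hpc zs hzsWc
  obtain ⟨hpsWc, hpsne, hpsinv, _⟩ := hpc s hsWc
  have hpszs : pc s ≠ zs := fun h => hspzs (by rw [← h, hpsinv])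
  have hpspzs : pc s ≠ pc zs := fun h => hszs (by rw [← hpsinv, h, hpzsinv])
  have hWceq : Wc = {zs, pc zs, s, pc s} := by
    symm
    apply Finset.eq_of_subset_of_card_le
    · intro t ht
      rw [Finset.mem_insert, Finset.mem_insert, Finset.mem_insert, Finset.mem_singleton] at ht
      rcases ht with rfl | rfl | rfl | rfl
      exacts [hzsWc, hpzsWc, hsWc, hpsWc]
    · rw [hWc4]
      have h3 : s ∉ ({pc s} : Finset V) := by
        simp only [Finset.mem_singleton]; exact fun h => hpsne h.symm
      have h2 : pc zs ∉ ({s, pc s} : Finset V) := by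
        simp only [Finset.mem_insert, Finset.mem_singleton, not_or]
        exact ⟨fun h => hspzs h.symm, fun h => hpspzs h.symm⟩
      have h1 : zs ∉ ({pc zs, s, pc s} : Finset V) := by
        simp only [Finset.mem_insert, Finset.mem_singleton, not_or]
        exact ⟨fun h => hpzsne h.symm, fun h => hszs h.symm, fun h => hpszs h.symm⟩
      rw [Finset.card_insert_of_notMem h1, Finset.card_insert_of_notMem h2,
        Finset.card_insert_of_notMem h3, Finset.card_singleton]
  have hs'ps : s' = pc s := by
    have hx := hs'Wc
    rw [hWceq] at hx
    simp only [Finset.mem_insert, Finset.mem_singleton] at hx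
    rcases hx with h | h | h | h
    · exact absurd h hs'zs
    · exact absurd h hs'pzs
    · exact absurd h hs's
    · exact h
  obtain ⟨h, hhE, hbh, hzsh, hprop⟩ := Hcov zs hzsWc
  have hhm' : h ≠ m' := fun hh => hbm' (hh ▸ hbh)
  have hhn' : h ≠ n' := fun hh => hbn' (hh ▸ hbh)
  rcases hprop s hsWc with hsh | hpsh
  · have hintm : h ∩ m' = {zs} := inter_single hlin hhE hm'E hhm' hzsh hzsm'
    have hmem : s ∈ h ∩ m' := Finset.mem_inter.2 ⟨hsh, hsm'⟩
    rw [hintm] at hmem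
    exact hszs (by simpa using hmem)
  · have hintn : h ∩ n' = {zs} := inter_single hlin hhE hn'E hhn' hzsh hzsn'
    have hs'h : s' ∈ h := hs'ps ▸ hpsh
    have hmem : s' ∈ h ∩ n' := Finset.mem_inter.2 ⟨hs'h, hs'n'⟩
    rw [hintn] at hmem
    exact hs'zs (by simpa using hmem)

set_option maxHeartbeats 2000000 in
lemma propR (hlin : Linear3 E) (hcf : ¬ HasCrown E) {e : Finset V} {v a b : V}
    (he : e ∈ E) (hee : e = {v, a, b}) (hva : v ≠ a) (hvb : v ≠ b) (hab : a ≠ b)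
    (hdv : deg E v = 5) (hdb : deg E b = 5) (hda : 4 ≤ deg E a)
    (hlow : ((Nbr E v \ e).filter (fun u => deg E u ≤ 3)).card ≤ 1) : False := by
  have hve : v ∈ e := by rw [hee]; simp
  have hae : a ∈ e := by rw [hee]; simp
  have hbe : b ∈ e := by rw [hee]; simp
  -- W facts
  have hWmem : ∀ w ∈ Nbr E v \ e, w ≠ v ∧ w ≠ a ∧ w ≠ b ∧ w ∉ e := by
    intro w hw
    obtain ⟨hw1, hw2⟩ := Finset.mem_sdiff.1 hw
    exact ⟨(mem_Nbr.1 hw1).1, fun h => hw2 (h ▸ hae), fun h => hw2 (h ▸ hbe), hw2⟩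
  -- pair machinery
  have hWpair : ∀ w, ∃ p, w ∈ Nbr E v \ e →
      (p ∈ Nbr E v \ e ∧ p ≠ w ∧ ({v, w, p} : Finset V) ∈ E) := by
    intro w
    by_cases hw : w ∈ Nbr E v \ e
    · obtain ⟨hw1, hw2⟩ := Finset.mem_sdiff.1 hw
      obtain ⟨hwv, f, hfE, hvf, hwf⟩ := mem_Nbr.1 hw1
      have hfe : f ≠ e := fun h => hw2 (h ▸ hwf)
      obtain ⟨p, hpv, hpw, hform⟩ := third2 hlin hfE hvf hwf (fun h => hwv h.symm)
      have hpf : p ∈ f := by rw [hform]; simp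
      have hpe : p ∉ e := by
        intro hpe
        have hint := inter_single hlin hfE he hfe hvf hve
        have : p ∈ f ∩ e := Finset.mem_inter.2 ⟨hpf, hpe⟩
        rw [hint] at this
        exact hpv (by simpa using this)
      have hpN : p ∈ Nbr E v := mem_Nbr.2 ⟨hpv, f, hfE, hvf, hpf⟩
      exact ⟨p, fun _ => ⟨Finset.mem_sdiff.2 ⟨hpN, hpe⟩, hpw, by rw [← hform]; exact hfE⟩⟩
    · exact ⟨w, fun h => absurd h hw⟩
  choose pc hpc using hWpair
  have hpcW : ∀ w ∈ Nbr E v \ e, pc w ∈ Nbr E v \ e := fun w hw => (hpc w hw).1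
  have hpcne : ∀ w ∈ Nbr E v \ e, pc w ≠ w := fun w hw => (hpc w hw).2.1
  have hpcE : ∀ w ∈ Nbr E v \ e, ({v, w, pc w} : Finset V) ∈ E := fun w hw => (hpc w hw).2.2
  have huniq_vw : ∀ w ∈ Nbr E v \ e, ∀ f ∈ E, v ∈ f → w ∈ f → f = {v, w, pc w} := by
    intro w hw f hfE hvf hwf
    exact common_unique hlin hfE (hpcE w hw) (fun h => (hWmem w hw).1 h.symm) hvf hwf
      (by simp) (by simp)
  have hpcinv : ∀ w ∈ Nbr E v \ e, pc (pc w) = w := by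
    intro w hw
    have h1 := hpcE (pc w) (hpcW w hw)
    have h2 := huniq_vw (pc w) (hpcW w hw) _ (hpcE w hw) (by simp) (by simp)
    have h3 : pc (pc w) ∈ ({v, w, pc w} : Finset V) := by
      rw [h2]; simp
    rw [mem_triple] at h3
    rcases h3 with h | h | h
    · exact absurd h (fun hh => (hWmem (pc (pc w)) (hpcW (pc w) (hpcW w hw))).1 hh)
    · exact h
    · exact absurd h (hpcne (pc w) (hpcW w hw))
  have hpair_excl : ∀ w ∈ Nbr E v \ e, ∀ g ∈ E, v ∉ g → w ∈ g → pc w ∉ g := by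
    intro w hw g hgE hvg hwg hpcg
    have hgne : g ≠ ({v, w, pc w} : Finset V) := fun h => hvg (by rw [h]; simp)
    have hint := inter_single hlin hgE (hpcE w hw) hgne hwg (by simp)
    have : pc w ∈ g ∩ ({v, w, pc w} : Finset V) := Finset.mem_inter.2 ⟨hpcg, by simp⟩
    rw [hint] at this
    exact hpcne w hw (by simpa using this)
  -- W card = 8
  have hWcard : (Nbr E v \ e).card = 8 := by
    have h1 := Nbr_card hlin v
    rw [hdv] at h1
    have h2 : Nbr E v ∩ e = {a, b} := by
      ext t
      simp only [Finset.mem_inter, Finset.mem_insert, Finset.mem_singleton]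
      constructor
      · rintro ⟨ht1, ht2⟩
        have htv := (mem_Nbr.1 ht1).1
        rw [hee, mem_triple] at ht2
        tauto
      · rintro (rfl | rfl)
        · exact ⟨mem_Nbr.2 ⟨fun h => hva h.symm, e, he, hve, hae⟩, hae⟩
        · exact ⟨mem_Nbr.2 ⟨fun h => hvb h.symm, e, he, hve, hbe⟩, hbe⟩
    have h3 : (Nbr E v \ e).card + (Nbr E v ∩ e).card = (Nbr E v).card :=
      Finset.card_sdiff_add_card_inter _ _
    rw [h2, h1] at h3
    have h4 : ({a, b} : Finset V).card = 2 := by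
      rw [Finset.card_insert_of_notMem (by simpa using hab), Finset.card_singleton]
    omega
  -- B side
  have hBcard : ((E.filter fun k => b ∈ k).erase e).card = 4 := by
    rw [Finset.card_erase_of_mem (Finset.mem_filter.2 ⟨he, hbe⟩)]
    have h5 : (E.filter fun k => b ∈ k).card = 5 := hdb
    omega
  have hBmem : ∀ h ∈ (E.filter fun k => b ∈ k).erase e, h ∈ E ∧ b ∈ h ∧ h ≠ e := by
    intro h hh
    simp only [Finset.mem_erase, Finset.mem_filter] at hh
    exact ⟨hh.2.1, hh.2.2, hh.1⟩
  have hBsub : ∀ h ∈ (E.filter fun k => b ∈ k).erase e, h ⊆ insert b (Nbr E v \ e) := by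
    intro h hh
    obtain ⟨h1, h2, h3⟩ := hBmem h hh
    exact confine hlin hcf he hve hdv hae (fun x => hva x.symm) hda hbe (fun x => hvb x.symm)
      (fun x => hab x.symm) h1 h2 h3
  have hBcover : ∀ w ∈ Nbr E v \ e, ∃ h, h ∈ (E.filter fun k => b ∈ k).erase e ∧ w ∈ h := by
    have hU : ((E.filter fun k => b ∈ k).erase e).biUnion (fun h => h.erase b) = Nbr E v \ e := by
      apply Finset.eq_of_subset_of_card_le
      · intro x hx
        simp only [Finset.mem_biUnion] at hx
        obtain ⟨h, hh, hx2⟩ := hx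
        rcases Finset.mem_insert.1 (hBsub h hh (Finset.mem_of_mem_erase hx2)) with h1 | h1
        · exact absurd h1 (Finset.ne_of_mem_erase hx2)
        · exact h1
      · have hdisj : ∀ h1 ∈ (E.filter fun k => b ∈ k).erase e,
            ∀ h2 ∈ (E.filter fun k => b ∈ k).erase e, h1 ≠ h2 →
            Disjoint (h1.erase b) (h2.erase b) := by
          intro h1 hh1 h2 hh2 hne
          rw [Finset.disjoint_left]
          intro x hx1 hx2
          have hint := inter_single hlin (hBmem h1 hh1).1 (hBmem h2 hh2).1 hne
            (hBmem h1 hh1).2.1 (hBmem h2 hh2).2.1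
          have : x ∈ h1 ∩ h2 :=
            Finset.mem_inter.2 ⟨Finset.mem_of_mem_erase hx1, Finset.mem_of_mem_erase hx2⟩
          rw [hint] at this
          exact (Finset.ne_of_mem_erase hx1) (by simpa using this)
        rw [hWcard, Finset.card_biUnion hdisj]
        have hsum : ∀ h ∈ (E.filter fun k => b ∈ k).erase e, (h.erase b).card = 2 := by
          intro h hh
          rw [Finset.card_erase_of_mem (hBmem h hh).2.1, hlin.1 h (hBmem h hh).1]
        rw [Finset.sum_congr rfl hsum, Finset.sum_const, hBcard]
        simp
    intro w hw
    rw [← hU] at hw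
    simp only [Finset.mem_biUnion] at hw
    obtain ⟨h, hh, hw2⟩ := hw
    exact ⟨h, hh, Finset.mem_of_mem_erase hw2⟩
  have hBuniq : ∀ h1 h2, h1 ∈ (E.filter fun k => b ∈ k).erase e →
      h2 ∈ (E.filter fun k => b ∈ k).erase e → ∀ w, w ≠ b → w ∈ h1 → w ∈ h2 → h1 = h2 := by
    intro h1 h2 hh1 hh2 w hwb hw1 hw2
    exact common_unique hlin (hBmem h1 hh1).1 (hBmem h2 hh2).1 (fun h => hwb h.symm)
      (hBmem h1 hh1).2.1 hw1 (hBmem h2 hh2).2.1 hw2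
  -- g1
  have hg1ex : ∃ g1, g1 ∈ E ∧ a ∈ g1 ∧ g1 ≠ e := by
    have h1 : 4 ≤ (E.filter fun k => a ∈ k).card := hda
    have h2 := sdiff_card_ge (E.filter fun k => a ∈ k) {e}
    have h3 : ({e} : Finset (Finset V)).card = 1 := Finset.card_singleton e
    have h4 : 0 < ((E.filter fun k => a ∈ k) \ {e}).card := by omega
    obtain ⟨g1, hg1⟩ := Finset.card_pos.1 h4
    obtain ⟨hg11, hg12⟩ := Finset.mem_sdiff.1 hg1
    simp only [Finset.mem_filter] at hg11
    exact ⟨g1, hg11.1, hg11.2, by simpa using hg12⟩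
  obtain ⟨g1, hg1E, hag1, hg1e'⟩ := hg1ex
  have hg1sub : g1 ⊆ insert a (Nbr E v \ e) :=
    confine hlin hcf he hve hdv hbe (fun x => hvb x.symm) (by rw [hdb]; norm_num)
      hae (fun x => hva x.symm) hab hg1E hag1 hg1e'
  obtain ⟨α, γ, hαa, hγa2, hαγ, hg1form⟩ := third hlin hg1E hag1
  have hαg1 : α ∈ g1 := by rw [hg1form]; simp
  have hγg1 : γ ∈ g1 := by rw [hg1form]; simp
  have hWg1 : ∀ w ∈ g1, w ≠ a → w ∈ Nbr E v \ e := by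
    intro w hw hwa
    rcases Finset.mem_insert.1 (hg1sub hw) with h1 | h1
    · exact absurd h1 hwa
    · exact h1
  have hαW := hWg1 α hαg1 hαa
  have hγW := hWg1 γ hγg1 hγa2
  have hvg1 : v ∉ g1 := by
    intro h
    rcases Finset.mem_insert.1 (hg1sub h) with h1 | h1
    · exact hva h1
    · exact (hWmem v h1).1 rfl
  have hbg1 : b ∉ g1 := by
    intro h
    rcases Finset.mem_insert.1 (hg1sub h) with h1 | h1
    · exact hab h1.symm
    · exact (hWmem b h1).2.2.1 rfl
  have hβW := hpcW α hαW
  have hδW := hpcW γ hγW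
  -- distinctness of α, β = pc α, γ, δ = pc γ
  have hγpα : γ ≠ pc α := fun h => (hpair_excl α hαW g1 hg1E hvg1 hαg1) (h ▸ hγg1)
  have hαβ : α ≠ pc α := fun h => (hpcne α hαW) h.symm
  have hγδ : γ ≠ pc γ := fun h => (hpcne γ hγW) h.symm
  have hαδ : α ≠ pc γ := by
    intro h
    have hh : pc α = γ := by rw [h, hpcinv γ hγW]
    exact hγpα hh.symm
  have hβγ : pc α ≠ γ := fun h => hγpα h.symm
  have hβδ : pc α ≠ pc γ := by
    intro h
    have hh : α = γ := by rw [← hpcinv α hαW, h, hpcinv γ hγW]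
    exact hαγ hh
  -- HA, HG
  obtain ⟨HA, hHAB, hαHA⟩ := hBcover α hαW
  obtain ⟨HG, hHGB, hγHG⟩ := hBcover γ hγW
  obtain ⟨hHAE, hbHA, hHAe⟩ := hBmem HA hHAB
  obtain ⟨hHGE, hbHG, hHGe⟩ := hBmem HG hHGB
  have hHAHG : HA ≠ HG := by
    intro h
    have hne : HA ≠ g1 := fun hh => hbg1 (hh ▸ hbHA)
    have hint := inter_single hlin hHAE hg1E hne hαHA hαg1
    have hγint : γ ∈ HA ∩ g1 := Finset.mem_inter.2 ⟨h ▸ hγHG, hγg1⟩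
    rw [hint] at hγint
    exact hαγ ((by simpa using hγint) : γ = α).symm
  have hvHA : v ∉ HA := by
    intro hvh
    have hint := inter_single hlin hHAE he hHAe hbHA hbe
    have hm : v ∈ HA ∩ e := Finset.mem_inter.2 ⟨hvh, hve⟩
    rw [hint] at hm
    exact hvb (by simpa using hm)
  have hvHG : v ∉ HG := by
    intro hvh
    have hint := inter_single hlin hHGE he hHGe hbHG hbe
    have hm : v ∈ HG ∩ e := Finset.mem_inter.2 ⟨hvh, hve⟩
    rw [hint] at hm
    exact hvb (by simpa using hm)
  -- claim 6
  have hC6 : ∀ h, h ∈ (E.filter fun k => b ∈ k).erase e → α ∉ h → γ ∉ h →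
      ∀ w ∈ Nbr E v \ e, w ≠ α → w ≠ pc α → w ≠ γ → w ≠ pc γ → (w ∈ h ∨ pc w ∈ h) := by
    intro h hhB hαh hγh w hwW hwα hwβ hwγ hwδ
    by_contra hcon
    push_neg at hcon
    obtain ⟨hwh, hpwh⟩ := hcon
    obtain ⟨hhE, hbh, hhe⟩ := hBmem h hhB
    have hvh : v ∉ h := by
      intro hvh
      have hint := inter_single hlin hhE he hhe hbh hbe
      have hm : v ∈ h ∩ e := Finset.mem_inter.2 ⟨hvh, hve⟩
      rw [hint] at hm
      exact hvb (by simpa using hm)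
    have d12 : ({v, w, pc w} : Finset V) ∩ g1 = ∅ := by
      ext x
      simp only [Finset.mem_inter, Finset.notMem_empty, iff_false, not_and]
      intro hx1 hx2
      rw [mem_triple] at hx1
      rcases hx1 with rfl | rfl | rfl
      · exact hvg1 hx2
      · rw [hg1form, mem_triple] at hx2
        rcases hx2 with h1 | h1 | h1
        · exact (hWmem x hwW).2.1 h1
        · exact hwα h1
        · exact hwγ h1
      · rw [hg1form, mem_triple] at hx2
        rcases hx2 with h1 | h1 | h1
        · exact (hWmem _ (hpcW w hwW)).2.1 h1
        · exact hwβ (by rw [← hpcinv w hwW, h1])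
        · exact hwδ (by rw [← hpcinv w hwW, h1])
    have d13 : ({v, w, pc w} : Finset V) ∩ h = ∅ := by
      ext x
      simp only [Finset.mem_inter, Finset.notMem_empty, iff_false, not_and]
      intro hx1 hx2
      rw [mem_triple] at hx1
      rcases hx1 with rfl | rfl | rfl
      · exact hvh hx2
      · exact hwh hx2
      · exact hpwh hx2
    have d23 : g1 ∩ h = ∅ := by
      ext x
      simp only [Finset.mem_inter, Finset.notMem_empty, iff_false, not_and]
      intro hx1 hx2
      rw [hg1form, mem_triple] at hx1
      rcases hx1 with rfl | rfl | rfl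
      · rcases Finset.mem_insert.1 (hBsub h hhB hx2) with h1 | h1
        · exact hab h1
        · exact (hWmem x h1).2.1 rfl
      · exact hαh hx2
      · exact hγh hx2
    exact build_crown hcf he (hpcE w hwW) hg1E hhE hva hvb hab hee d12 d13 d23
      (inter_single hlin (hpcE w hwW) he (fun hh => (hWmem w hwW).2.2.2 (hh ▸ (by simp : w ∈ ({v, w, pc w} : Finset V)))) (by simp) hve)
      (inter_single hlin hg1E he hg1e' hag1 hae)
      (inter_single hlin hhE he hhe hbh hbe)
  -- two other B edges
  have hB'ex : ∀ x ∈ Nbr E v \ e, x ≠ α → x ≠ pc α → x ≠ γ → x ≠ pc γ →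
      x ∈ HA ∨ x ∈ HG → False := by
    intro x hxW hxα hxβ hxγ hxδ hxmem
    have h2 := sdiff_card_ge ((E.filter fun k => b ∈ k).erase e) {HA, HG}
    have h3 : ({HA, HG} : Finset (Finset V)).card ≤ 2 := by
      by_cases hq : HA = HG
      · rw [hq]; simp
      · rw [Finset.card_insert_of_notMem (by simpa using hq)]; simp
    have h15 : 1 < (((E.filter fun k => b ∈ k).erase e) \ {HA, HG}).card := by omega
    obtain ⟨h1', hh1', h2', hh2', hne'⟩ := Finset.one_lt_card.1 h15
    obtain ⟨hm1, hn1⟩ := Finset.mem_sdiff.1 hh1'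
    obtain ⟨hm2, hn2⟩ := Finset.mem_sdiff.1 hh2'
    simp only [Finset.mem_insert, Finset.mem_singleton, not_or] at hn1 hn2
    have hα1 : α ∉ h1' := fun hc => hn1.1 (hBuniq h1' HA hm1 hHAB α (hWmem α hαW).2.2.1 hc hαHA)
    have hγ1 : γ ∉ h1' := fun hc => hn1.2 (hBuniq h1' HG hm1 hHGB γ (hWmem γ hγW).2.2.1 hc hγHG)
    have hα2 : α ∉ h2' := fun hc => hn2.1 (hBuniq h2' HA hm2 hHAB α (hWmem α hαW).2.2.1 hc hαHA)
    have hγ2 : γ ∉ h2' := fun hc => hn2.2 (hBuniq h2' HG hm2 hHGB γ (hWmem γ hγW).2.2.1 hc hγHG)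
    have hx1 := hC6 h1' hm1 hα1 hγ1 x hxW hxα hxβ hxγ hxδ
    have hx2 := hC6 h2' hm2 hα2 hγ2 x hxW hxα hxβ hxγ hxδ
    have hxh1 : x ∉ h1' := by
      intro hc
      rcases hxmem with hm | hm
      · exact hn1.1 (hBuniq h1' HA hm1 hHAB x (hWmem x hxW).2.2.1 hc hm)
      · exact hn1.2 (hBuniq h1' HG hm1 hHGB x (hWmem x hxW).2.2.1 hc hm)
    have hxh2 : x ∉ h2' := by
      intro hc
      rcases hxmem with hm | hm
      · exact hn2.1 (hBuniq h2' HA hm2 hHAB x (hWmem x hxW).2.2.1 hc hm)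
      · exact hn2.2 (hBuniq h2' HG hm2 hHGB x (hWmem x hxW).2.2.1 hc hm)
    have hp1 : pc x ∈ h1' := hx1.resolve_left hxh1
    have hp2 : pc x ∈ h2' := hx2.resolve_left hxh2
    exact hne' (hBuniq h1' h2' hm1 hm2 (pc x) (hWmem _ (hpcW x hxW)).2.2.1 hp1 hp2)
  -- HA = {b, α, pc γ}
  obtain ⟨xA, hxAb, hxAα, hHAform0⟩ := third2 hlin hHAE hbHA hαHA
    (fun h => (hWmem α hαW).2.2.1 h.symm)
  have hxAHA : xA ∈ HA := by rw [hHAform0]; simp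
  have hxAW : xA ∈ Nbr E v \ e := by
    rcases Finset.mem_insert.1 (hBsub HA hHAB hxAHA) with h1 | h1
    · exact absurd h1 hxAb
    · exact h1
  have hxAβ : xA ≠ pc α := by
    intro h
    exact (hpair_excl α hαW HA hHAE hvHA hαHA) (h ▸ hxAHA)
  have hxAγ : xA ≠ γ := by
    intro h
    exact hHAHG (hBuniq HA HG hHAB hHGB γ (hWmem γ hγW).2.2.1 (h ▸ hxAHA) hγHG)
  have hxA : xA = pc γ := by
    by_contra hxAδ
    exact hB'ex xA hxAW hxAα hxAβ hxAγ hxAδ (Or.inl hxAHA)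
  have hHAform : HA = {b, α, pc γ} := by rw [hHAform0, hxA]
  -- HG = {b, γ, pc α}
  obtain ⟨xG, hxGb, hxGγ, hHGform0⟩ := third2 hlin hHGE hbHG hγHG
    (fun h => (hWmem γ hγW).2.2.1 h.symm)
  have hxGHG : xG ∈ HG := by rw [hHGform0]; simp
  have hxGW : xG ∈ Nbr E v \ e := by
    rcases Finset.mem_insert.1 (hBsub HG hHGB hxGHG) with h1 | h1
    · exact absurd h1 hxGb
    · exact h1
  have hxGδ : xG ≠ pc γ := by
    intro h
    exact (hpair_excl γ hγW HG hHGE hvHG hγHG) (h ▸ hxGHG)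
  have hxGα : xG ≠ α := by
    intro h
    exact hHAHG (hBuniq HA HG hHAB hHGB α (hWmem α hαW).2.2.1 hαHA (h ▸ hxGHG))
  have hxG : xG = pc α := by
    by_contra hxGβ
    exact hB'ex xG hxGW hxGα hxGβ hxGγ hxGδ (Or.inr hxGHG)
  have hHGform : HG = {b, γ, pc α} := by rw [hHGform0, hxG]
  -- Wc
  have hquadW : ({α, pc α, γ, pc γ} : Finset V) ⊆ Nbr E v \ e := by
    intro x hx
    rw [Finset.mem_insert, Finset.mem_insert, Finset.mem_insert, Finset.mem_singleton] at hx
    rcases hx with rfl | rfl | rfl | rfl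
    exacts [hαW, hβW, hγW, hδW]
  have hquadcard : ({α, pc α, γ, pc γ} : Finset V).card = 4 := by
    rw [Finset.card_insert_of_notMem, Finset.card_insert_of_notMem,
      Finset.card_insert_of_notMem, Finset.card_singleton]
    · simp only [Finset.mem_singleton]; exact hγδ
    · simp only [Finset.mem_insert, Finset.mem_singleton, not_or]
      exact ⟨hβγ, hβδ⟩
    · simp only [Finset.mem_insert, Finset.mem_insert, Finset.mem_singleton, not_or]
      exact ⟨hαβ, hαγ, hαδ⟩
  have hWc4 : ((Nbr E v \ e) \ {α, pc α, γ, pc γ}).card = 4 := by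
    rw [Finset.card_sdiff_of_subset hquadW, hWcard, hquadcard]
  have hWcsub : ((Nbr E v \ e) \ {α, pc α, γ, pc γ}) ⊆ Nbr E v \ e := Finset.sdiff_subset
  have hαWc : α ∉ (Nbr E v \ e) \ {α, pc α, γ, pc γ} :=
    fun h => (Finset.mem_sdiff.1 h).2 (by simp)
  have hβWc : pc α ∉ (Nbr E v \ e) \ {α, pc α, γ, pc γ} :=
    fun h => (Finset.mem_sdiff.1 h).2 (by simp)
  have hγWc : γ ∉ (Nbr E v \ e) \ {α, pc α, γ, pc γ} :=
    fun h => (Finset.mem_sdiff.1 h).2 (by simp)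
  have hδWc : pc γ ∉ (Nbr E v \ e) \ {α, pc α, γ, pc γ} :=
    fun h => (Finset.mem_sdiff.1 h).2 (by simp)
  have hWcmem : ∀ z ∈ (Nbr E v \ e) \ {α, pc α, γ, pc γ},
      z ∈ Nbr E v \ e ∧ z ≠ α ∧ z ≠ pc α ∧ z ≠ γ ∧ z ≠ pc γ := by
    intro z hz
    obtain ⟨h1, h2⟩ := Finset.mem_sdiff.1 hz
    simp only [Finset.mem_insert, Finset.mem_singleton, not_or] at h2
    exact ⟨h1, h2.1, h2.2.1, h2.2.2.1, h2.2.2.2⟩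
  have hpcWc : ∀ z ∈ (Nbr E v \ e) \ {α, pc α, γ, pc γ},
      pc z ∈ (Nbr E v \ e) \ {α, pc α, γ, pc γ} ∧ pc z ≠ z ∧ pc (pc z) = z ∧
      ({v, z, pc z} : Finset V) ∈ E := by
    intro z hz
    obtain ⟨hzW, hzα, hzβ, hzγ, hzδ⟩ := hWcmem z hz
    refine ⟨?_, hpcne z hzW, hpcinv z hzW, hpcE z hzW⟩
    rw [Finset.mem_sdiff]
    refine ⟨hpcW z hzW, ?_⟩
    simp only [Finset.mem_insert, Finset.mem_singleton, not_or]
    refine ⟨?_, ?_, ?_, ?_⟩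
    · intro h; exact hzβ (by rw [← hpcinv z hzW, h])
    · intro h
      have : pc (pc z) = pc (pc α) := by rw [h]
      rw [hpcinv z hzW, hpcinv α hαW] at this
      exact hzα this
    · intro h; exact hzδ (by rw [← hpcinv z hzW, h])
    · intro h
      have : pc (pc z) = pc (pc γ) := by rw [h]
      rw [hpcinv z hzW, hpcinv γ hγW] at this
      exact hzγ this
  have Hcov : ∀ z ∈ (Nbr E v \ e) \ {α, pc α, γ, pc γ},
      ∃ h ∈ E, b ∈ h ∧ z ∈ h ∧
      (∀ w ∈ (Nbr E v \ e) \ {α, pc α, γ, pc γ}, w ∈ h ∨ pc w ∈ h) := by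
    intro z hz
    obtain ⟨hzW, hzα, hzβ, hzγ, hzδ⟩ := hWcmem z hz
    obtain ⟨h, hhB, hzh⟩ := hBcover z hzW
    obtain ⟨hhE, hbh, hhe⟩ := hBmem h hhB
    have hαh : α ∉ h := by
      intro hc
      have heq := hBuniq h HA hhB hHAB α (hWmem α hαW).2.2.1 hc hαHA
      have hzHA : z ∈ HA := heq ▸ hzh
      rw [hHAform, mem_triple] at hzHA
      rcases hzHA with h1 | h1 | h1
      · exact (hWmem z hzW).2.2.1 h1
      · exact hzα h1
      · exact hzδ h1
    have hγh : γ ∉ h := by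
      intro hc
      have heq := hBuniq h HG hhB hHGB γ (hWmem γ hγW).2.2.1 hc hγHG
      have hzHG : z ∈ HG := heq ▸ hzh
      rw [hHGform, mem_triple] at hzHG
      rcases hzHG with h1 | h1 | h1
      · exact (hWmem z hzW).2.2.1 h1
      · exact hzγ h1
      · exact hzβ h1
    refine ⟨h, hhE, hbh, hzh, ?_⟩
    intro w hw
    obtain ⟨hwW, hwα, hwβ, hwγ, hwδ⟩ := hWcmem w hw
    exact hC6 h hhB hαh hγh w hwW hwα hwβ hwγ hwδ
  have hWdec : ∀ w ∈ Nbr E v \ e,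
      w = α ∨ w = pc α ∨ w = γ ∨ w = pc γ ∨ w ∈ (Nbr E v \ e) \ {α, pc α, γ, pc γ} := by
    intro w hw
    by_cases h1 : w = α; · exact Or.inl h1
    by_cases h2 : w = pc α; · exact Or.inr (Or.inl h2)
    by_cases h3 : w = γ; · exact Or.inr (Or.inr (Or.inl h3))
    by_cases h4 : w = pc γ; · exact Or.inr (Or.inr (Or.inr (Or.inl h4)))
    refine Or.inr (Or.inr (Or.inr (Or.inr ?_)))
    rw [Finset.mem_sdiff]
    refine ⟨hw, ?_⟩
    simp only [Finset.mem_insert, Finset.mem_singleton, not_or]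
    exact ⟨h1, h2, h3, h4⟩
  -- a pair with both degrees ≥ 4
  have hlows : (4 ≤ deg E γ ∧ 4 ≤ deg E (pc γ)) ∨ (4 ≤ deg E α ∧ 4 ≤ deg E (pc α)) := by
    by_contra hcontra
    push_neg at hcontra
    obtain ⟨h1, h2⟩ := hcontra
    have hw1 : ∃ w1, (w1 = γ ∨ w1 = pc γ) ∧ w1 ∈ Nbr E v \ e ∧ deg E w1 ≤ 3 := by
      by_cases hg : 4 ≤ deg E γ
      · exact ⟨pc γ, Or.inr rfl, hδW, by have := h1 hg; omega⟩
      · exact ⟨γ, Or.inl rfl, hγW, by omega⟩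
    have hw2 : ∃ w2, (w2 = α ∨ w2 = pc α) ∧ w2 ∈ Nbr E v \ e ∧ deg E w2 ≤ 3 := by
      by_cases hg : 4 ≤ deg E α
      · exact ⟨pc α, Or.inr rfl, hβW, by have := h2 hg; omega⟩
      · exact ⟨α, Or.inl rfl, hαW, by omega⟩
    obtain ⟨w1, hw1m, hw1W, hw1d⟩ := hw1
    obtain ⟨w2, hw2m, hw2W, hw2d⟩ := hw2
    have hne : w1 ≠ w2 := by
      rcases hw1m with rfl | rfl <;> rcases hw2m with rfl | rfl
      · exact hαγ.symm
      · exact fun h => hγpα h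
      · exact hαδ.symm
      · exact hβδ.symm
    have hcard2 : 1 < ((Nbr E v \ e).filter (fun u => deg E u ≤ 3)).card :=
      Finset.one_lt_card.2 ⟨w1, Finset.mem_filter.2 ⟨hw1W, hw1d⟩,
        w2, Finset.mem_filter.2 ⟨hw2W, hw2d⟩, hne⟩
    omega
  rcases hlows with ⟨hdγ4, hdδ4⟩ | ⟨hdγ4, hdδ4⟩
  · exact endgame hlin hcf he hee hva hvb hab hdv hg1E hg1form hHAE hHAform hHGE hHGform
      (hpcE γ hγW) (hpcE α hαW) hαW hβW hγW hδW hWcsub hWc4 hαWc hβWc hγWc hδWc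
      hαβ hαγ hαδ hβγ hβδ hγδ hpcWc Hcov hWdec hdγ4 hdδ4
  · exact endgame hlin hcf he hee hva hvb hab hdv hg1E
      (by rw [hg1form, Finset.pair_comm α γ]) hHGE hHGform hHAE hHAform
      (hpcE α hαW) (hpcE γ hγW) hγW hδW hαW hβW hWcsub hWc4 hγWc hδWc hαWc hβWc
      hγδ hαγ.symm hγpα (fun h => hαδ h.symm) hβδ.symm hαβ hpcWc Hcov
      (fun w hw => by rcases hWdec w hw with h | h | h | h | h <;> tauto) hdγ4 hdδ4

lemma Nbr_symm {v w : V} (h : w ∈ Nbr E v) : v ∈ Nbr E w := by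
  obtain ⟨h1, f, hf, hvf, hwf⟩ := mem_Nbr.1 h
  exact mem_Nbr.2 ⟨fun hh => h1 hh.symm, f, hf, hwf, hvf⟩

/-- key1 : if v has degree 5 and at most one low neighbour, then any degree-5 neighbour w
  of v shares its edge with a low vertex, which is the unique low one. -/
lemma key1 (hlin : Linear3 E) (hcf : ¬ HasCrown E) {v w : V}
    (hdv : deg E v = 5)
    (hlow : ((Nbr E v).filter (fun u => deg E u ≤ 3)).card ≤ 1)
    (hw : w ∈ Nbr E v) (hdw : deg E w = 5) :
    ∃ w' f, f ∈ E ∧ f = {v, w, w'} ∧ w' ∈ Nbr E v ∧ deg E w' ≤ 3 ∧ w' ≠ w ∧ w' ≠ v := by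
  obtain ⟨hwv, f, hfE, hvf, hwf⟩ := mem_Nbr.1 hw
  obtain ⟨w', hw'v, hw'w, hform⟩ := third2 hlin hfE hvf hwf (fun h => hwv h.symm)
  have hw'f : w' ∈ f := by rw [hform]; simp
  have hw'N : w' ∈ Nbr E v := mem_Nbr.2 ⟨hw'v, f, hfE, hvf, hw'f⟩
  refine ⟨w', f, hfE, hform, hw'N, ?_, hw'w, hw'v⟩
  by_contra hd
  push_neg at hd
  have hform2 : f = {v, w', w} := by rw [hform, Finset.pair_comm w w']
  apply propR hlin hcf hfE hform2 (fun h => hw'v h.symm) (fun h => hwv h.symm)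
    (fun h => hw'w h) hdv hdw (by omega)
  calc ((Nbr E v \ f).filter (fun u => deg E u ≤ 3)).card
      ≤ ((Nbr E v).filter (fun u => deg E u ≤ 3)).card :=
        Finset.card_le_card (Finset.filter_subset_filter _ (Finset.sdiff_subset))
    _ ≤ 1 := hlow

/-- keyA : degree-5 vertex with no low neighbour has all neighbours of degree 4. -/
lemma keyA (hlin : Linear3 E) (hcf : ¬ HasCrown E) (hdeg : ∀ u : V, deg E u ≤ 5) {v : V}
    (hdv : deg E v = 5)
    (hlow : ((Nbr E v).filter (fun u => deg E u ≤ 3)).card = 0) :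
    ∀ w ∈ Nbr E v, deg E w = 4 := by
  intro w hw
  have hnl : ∀ u ∈ Nbr E v, ¬ (deg E u ≤ 3) := by
    intro u hu hc
    have : u ∈ (Nbr E v).filter (fun u => deg E u ≤ 3) := Finset.mem_filter.2 ⟨hu, hc⟩
    rw [Finset.card_eq_zero.1 hlow] at this
    simp at this
  have h1 := hnl w hw
  have h2 := hdeg w
  by_cases h5 : deg E w = 5
  · obtain ⟨w', f, hfE, hform, hw'N, hw'low, _, _⟩ := key1 hlin hcf hdv (by omega) hw h5
    exact absurd hw'low (hnl w' hw'N)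
  · omega

/-- keyC : around a degree-5 vertex with no low neighbour, each neighbour w has v as its
  unique degree-5 neighbour. -/
lemma keyC (hlin : Linear3 E) (hcf : ¬ HasCrown E) (hdeg : ∀ u : V, deg E u ≤ 5) {v w : V}
    (hdv : deg E v = 5)
    (hlow : ((Nbr E v).filter (fun u => deg E u ≤ 3)).card = 0)
    (hw : w ∈ Nbr E v) :
    ∀ x ∈ Nbr E w, deg E x = 5 → x = v := by
  intro x hx hdx
  obtain ⟨hwv, f, hfE, hvf, hwf⟩ := mem_Nbr.1 hw
  obtain ⟨w2, hw2v, hw2w, hform⟩ := third2 hlin hfE hvf hwf (fun h => hwv h.symm)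
  have hw2f : w2 ∈ f := by rw [hform]; simp
  have hw2N : w2 ∈ Nbr E v := mem_Nbr.2 ⟨hw2v, f, hfE, hvf, hw2f⟩
  have hdw2 : deg E w2 = 4 := keyA hlin hcf hdeg hdv hlow w2 hw2N
  obtain ⟨hxw, g, hgE, hwg, hxg⟩ := mem_Nbr.1 hx
  by_cases hgf : g = f
  · subst hgf
    have hxf : x ∈ g := hxg
    rw [hform, mem_triple] at hxf
    rcases hxf with h | h | h
    · exact h
    · exact absurd h (fun hh => hxw hh)
    · subst h
      rw [hdw2] at hdx
      omega
  · have hsub : g ⊆ insert w (Nbr E v \ f) :=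
      confine hlin hcf hfE hvf hdv hw2f hw2v (by omega)
        hwf (fun h => hwv h) (fun h => hw2w h.symm) hgE hwg hgf
    rcases Finset.mem_insert.1 (hsub hxg) with h1 | h1
    · exact absurd h1 hxw
    · have := keyA hlin hcf hdeg hdv hlow x (Finset.mem_sdiff.1 h1).1
      rw [this] at hdx
      omega

/-- keyD : a low vertex u which is the unique low neighbour of some degree-5 vertex v
  has at most 2 degree-5 neighbours. -/
lemma keyD (hlin : Linear3 E) (hcf : ¬ HasCrown E) (hdeg : ∀ u : V, deg E u ≤ 5) {v u : V}
    (hdv : deg E v = 5) (hu : u ∈ Nbr E v) (hdu : deg E u ≤ 3)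
    (hlow : ((Nbr E v).filter (fun x => deg E x ≤ 3)).card ≤ 1) :
    ((Nbr E u).filter (fun x => deg E x = 5)).card ≤ 2 := by
  obtain ⟨huv, f, hfE, hvf, huf⟩ := mem_Nbr.1 hu
  obtain ⟨a5, ha5v, ha5u, hform⟩ := third2 hlin hfE hvf huf (fun h => huv h.symm)
  have ha5f : a5 ∈ f := by rw [hform]; simp
  have ha5N : a5 ∈ Nbr E v := mem_Nbr.2 ⟨ha5v, f, hfE, hvf, ha5f⟩
  -- the low neighbours of v are exactly {u}
  have hueq : (Nbr E v).filter (fun x => deg E x ≤ 3) = {u} := by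
    apply Finset.eq_singleton_iff_unique_mem.2
    refine ⟨Finset.mem_filter.2 ⟨hu, hdu⟩, ?_⟩
    intro x hx
    by_contra hxu
    have h2 : 1 < ((Nbr E v).filter (fun x => deg E x ≤ 3)).card :=
      Finset.one_lt_card.2 ⟨x, hx, u, Finset.mem_filter.2 ⟨hu, hdu⟩, hxu⟩
    omega
  have ha5nl : ¬ (deg E a5 ≤ 3) := by
    intro hc
    have : a5 ∈ (Nbr E v).filter (fun x => deg E x ≤ 3) := Finset.mem_filter.2 ⟨ha5N, hc⟩
    rw [hueq] at this
    exact ha5u (by simpa using this)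
  -- any degree-5 neighbour of v outside f would contradict key1
  have hW5 : ∀ w ∈ Nbr E v, deg E w = 5 → w = a5 := by
    intro w hw hdw
    obtain ⟨w', f', hf'E, hf'form, hw'N, hw'low, hw'w, hw'v⟩ := key1 hlin hcf hdv hlow hw hdw
    have hw'u : w' = u := by
      have : w' ∈ (Nbr E v).filter (fun x => deg E x ≤ 3) := Finset.mem_filter.2 ⟨hw'N, hw'low⟩
      rw [hueq] at this
      simpa using this
    subst hw'u
    have hff' : f' = f := common_unique hlin hf'E hfE (fun h => huv h.symm)
      (by rw [hf'form]; simp) (by rw [hf'form]; simp) hvf huf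
    have hwf : w ∈ f := hff' ▸ (by rw [hf'form]; simp : w ∈ f')
    rw [hform, mem_triple] at hwf
    rcases hwf with h | h | h
    · exact absurd h (mem_Nbr.1 hw).1
    · rw [h] at hdw; omega
    · exact h
  -- degree-5 neighbours of u are within {v, a5}
  have hsub : (Nbr E u).filter (fun x => deg E x = 5) ⊆ {v, a5} := by
    intro x hx
    obtain ⟨hxN, hdx⟩ := Finset.mem_filter.1 hx
    obtain ⟨hxu, g, hgE, hug, hxg⟩ := mem_Nbr.1 hxN
    by_cases hgf : g = f
    · subst hgf
      have hxf : x ∈ g := hxg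
      rw [hform, mem_triple] at hxf
      rcases hxf with h | h | h
      · simp [h]
      · exact absurd h hxu
      · simp [h]
    · have hsub2 : g ⊆ insert u (Nbr E v \ f) :=
        confine hlin hcf hfE hvf hdv ha5f ha5v (by omega) huf (fun h => huv h)
          (fun h => ha5u h.symm) hgE hug hgf
      rcases Finset.mem_insert.1 (hsub2 hxg) with h1 | h1
      · exact absurd h1 hxu
      · obtain ⟨h2, h3⟩ := Finset.mem_sdiff.1 h1
        have := hW5 x h2 hdx
        subst this
        exact absurd ha5f h3
  calc ((Nbr E u).filter (fun x => deg E x = 5)).card ≤ ({v, a5} : Finset V).card :=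
        Finset.card_le_card hsub
    _ ≤ 2 := by
        by_cases h : v = a5
        · rw [h]; simp
        · rw [Finset.card_insert_of_notMem (by simpa using h)]; simp

variable [Fintype V]

lemma cardC (hlin : Linear3 E) (hcf : ¬ HasCrown E) (hdeg : ∀ u : V, deg E u ≤ 5) :
    ((univ.filter (fun v => deg E v = 5)).filter
      (fun v => ((Nbr E v).filter (fun u => deg E u ≤ 3)).card = 0)).card ≤
    (univ.filter (fun v => deg E v = 4)).card := by
  classical
  set C := (univ.filter (fun v => deg E v = 5)).filter
      (fun v => ((Nbr E v).filter (fun u => deg E u ≤ 3)).card = 0) with hCdef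
  have hCmem : ∀ v ∈ C, deg E v = 5 ∧ ((Nbr E v).filter (fun u => deg E u ≤ 3)).card = 0 := by
    intro v hv
    rw [hCdef] at hv
    simp only [Finset.mem_filter, Finset.mem_univ, true_and] at hv
    exact hv
  have hne : ∀ v ∈ C, (Nbr E v).Nonempty := by
    intro v hv
    rw [← Finset.card_pos, Nbr_card hlin v, (hCmem v hv).1]
    omega
  apply Finset.card_le_card_of_injOn
    (fun v => if h : (Nbr E v).Nonempty then h.choose else v)
  · intro v hv
    have h := hne v hv
    simp only [dif_pos h]
    have hmem : h.choose ∈ Nbr E v := h.choose_spec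
    simp only [Finset.mem_coe, Finset.mem_filter, Finset.mem_univ, true_and]
    exact keyA hlin hcf hdeg (hCmem v hv).1 (hCmem v hv).2 _ hmem
  · intro v1 hv1 v2 hv2 heq
    have h1 := hne v1 hv1
    have h2 := hne v2 hv2
    simp only [dif_pos h1, dif_pos h2] at heq
    have hw1 : h1.choose ∈ Nbr E v1 := h1.choose_spec
    have hw2 : h2.choose ∈ Nbr E v2 := h2.choose_spec
    rw [heq] at hw1
    exact keyC hlin hcf hdeg (hCmem v2 hv2).1 (hCmem v2 hv2).2 hw2 v1
      (Nbr_symm hw1) (hCmem v1 hv1).1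

lemma cardAB (hlin : Linear3 E) (hcf : ¬ HasCrown E) (hdeg : ∀ u : V, deg E u ≤ 5) :
    (((univ.filter (fun v => deg E v = 5)).filter
      (fun v => ¬ ((Nbr E v).filter (fun u => deg E u ≤ 3)).card = 0)).card : ℚ) ≤
    ∑ u ∈ univ.filter (fun v => deg E v ≤ 3), (9 - 2 * (deg E u : ℚ)) := by
  classical
  set AB := (univ.filter (fun v => deg E v = 5)).filter
      (fun v => ¬ ((Nbr E v).filter (fun u => deg E u ≤ 3)).card = 0) with hABdef
  have hABmem : ∀ v ∈ AB, deg E v = 5 ∧ 1 ≤ ((Nbr E v).filter (fun u => deg E u ≤ 3)).card := by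
    intro v hv
    rw [hABdef] at hv
    simp only [Finset.mem_filter, Finset.mem_univ, true_and] at hv
    exact ⟨hv.1, by omega⟩
  have step1 : ∀ v ∈ AB, ∑ _u ∈ (Nbr E v).filter (fun u => deg E u ≤ 3),
      (1 / (((Nbr E v).filter (fun u => deg E u ≤ 3)).card : ℚ)) = 1 := by
    intro v hv
    rw [Finset.sum_const, nsmul_eq_mul]
    have h1 := (hABmem v hv).2
    have hne : (((Nbr E v).filter (fun u => deg E u ≤ 3)).card : ℚ) ≠ 0 := by
      exact_mod_cast (by omega : ¬ ((Nbr E v).filter (fun u => deg E u ≤ 3)).card = 0)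
    field_simp
  have step2 : (AB.card : ℚ) = ∑ v ∈ AB, ∑ u ∈ univ,
      (if u ∈ (Nbr E v).filter (fun x => deg E x ≤ 3) then
        (1 / (((Nbr E v).filter (fun x => deg E x ≤ 3)).card : ℚ)) else 0) := by
    have heq : ∀ v ∈ AB, (∑ u ∈ univ,
        (if u ∈ (Nbr E v).filter (fun x => deg E x ≤ 3) then
          (1 / (((Nbr E v).filter (fun x => deg E x ≤ 3)).card : ℚ)) else 0)) = 1 := by
      intro v hv
      rw [Finset.sum_ite_mem, Finset.univ_inter]
      exact step1 v hv
    rw [Finset.sum_congr rfl heq]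
    simp
  rw [step2, Finset.sum_comm, Finset.sum_filter]
  apply Finset.sum_le_sum
  intro u _
  by_cases hdu : deg E u ≤ 3
  · rw [if_pos hdu, ← Finset.sum_filter]
    set S := AB.filter (fun v => u ∈ (Nbr E v).filter (fun x => deg E x ≤ 3)) with hSdef
    have hSmem : ∀ v ∈ S, deg E v = 5 ∧ 1 ≤ ((Nbr E v).filter (fun x => deg E x ≤ 3)).card ∧
        u ∈ Nbr E v := by
      intro v hv
      rw [hSdef] at hv
      obtain ⟨hv1, hv2⟩ := Finset.mem_filter.1 hv
      exact ⟨(hABmem v hv1).1, (hABmem v hv1).2, (Finset.mem_filter.1 hv2).1⟩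
    have hSsub : S ⊆ (Nbr E u).filter (fun x => deg E x = 5) := by
      intro v hv
      exact Finset.mem_filter.2 ⟨Nbr_symm (hSmem v hv).2.2, (hSmem v hv).1⟩
    have hd3 : (deg E u : ℚ) ≤ 3 := by exact_mod_cast hdu
    by_cases hone : ∃ v0 ∈ S, ((Nbr E v0).filter (fun x => deg E x ≤ 3)).card = 1
    · obtain ⟨v0, hv0S, hv0l⟩ := hone
      have hkd := keyD hlin hcf hdeg (hSmem v0 hv0S).1 (hSmem v0 hv0S).2.2 hdu (by omega)
      have hScard : S.card ≤ 2 := le_trans (Finset.card_le_card hSsub) hkd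
      have hbound : ∀ v ∈ S, (1 / (((Nbr E v).filter (fun x => deg E x ≤ 3)).card : ℚ)) ≤ 1 := by
        intro v hv
        have h1 := (hSmem v hv).2.1
        have hpos : (0:ℚ) < (((Nbr E v).filter (fun x => deg E x ≤ 3)).card : ℚ) := by
          exact_mod_cast (by omega : 0 < ((Nbr E v).filter (fun x => deg E x ≤ 3)).card)
        rw [div_le_one hpos]
        exact_mod_cast h1
      calc ∑ v ∈ S, (1 / (((Nbr E v).filter (fun x => deg E x ≤ 3)).card : ℚ))
          ≤ S.card • (1:ℚ) := Finset.sum_le_card_nsmul S _ 1 hbound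
        _ = S.card := by simp
        _ ≤ 2 := by exact_mod_cast hScard
        _ ≤ 9 - 2 * (deg E u : ℚ) := by linarith
    · push_neg at hone
      have hbound : ∀ v ∈ S, (1 / (((Nbr E v).filter (fun x => deg E x ≤ 3)).card : ℚ)) ≤ 1/2 := by
        intro v hv
        have h1 := (hSmem v hv).2.1
        have h2 := hone v hv
        have h3 : 2 ≤ ((Nbr E v).filter (fun x => deg E x ≤ 3)).card := by omega
        have h3' : (2:ℚ) ≤ (((Nbr E v).filter (fun x => deg E x ≤ 3)).card : ℚ) := by
          exact_mod_cast h3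
        apply one_div_le_one_div_of_le (by norm_num) h3'
      have hScard : S.card ≤ 2 * deg E u := by
        calc S.card ≤ ((Nbr E u).filter (fun x => deg E x = 5)).card :=
              Finset.card_le_card hSsub
          _ ≤ (Nbr E u).card := Finset.card_le_card (Finset.filter_subset _ _)
          _ = 2 * deg E u := Nbr_card hlin u
      have hScard' : (S.card : ℚ) ≤ 2 * (deg E u : ℚ) := by exact_mod_cast hScard
      calc ∑ v ∈ S, (1 / (((Nbr E v).filter (fun x => deg E x ≤ 3)).card : ℚ))
          ≤ S.card • ((1:ℚ)/2) := Finset.sum_le_card_nsmul S _ (1/2) hbound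
        _ = (S.card : ℚ) / 2 := by rw [nsmul_eq_mul]; ring
        _ ≤ deg E u := by linarith
        _ ≤ 9 - 2 * (deg E u : ℚ) := by linarith
  · rw [if_neg hdu]
    apply le_of_eq
    apply Finset.sum_eq_zero
    intro v _
    rw [if_neg]
    intro hc
    exact hdu (Finset.mem_filter.1 hc).2

lemma handshake (hlin : Linear3 E) : ∑ v ∈ univ, deg E v = 3 * E.card := by
  classical
  have h1 : ∀ v : V, deg E v = ∑ e ∈ E, (if v ∈ e then 1 else 0) := by
    intro v
    rw [deg, Finset.card_filter]
  rw [Finset.sum_congr rfl (fun v _ => h1 v), Finset.sum_comm]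
  have h2 : ∀ e ∈ E, (∑ v ∈ univ, if v ∈ e then 1 else 0) = 3 := by
    intro e he
    rw [← Finset.card_filter]
    have : univ.filter (fun v => v ∈ e) = e := by
      ext x; simp
    rw [this, hlin.1 e he]
  rw [Finset.sum_congr rfl h2, Finset.sum_const, smul_eq_mul, mul_comm]

lemma main_ineq (hlin : Linear3 E) (hcf : ¬ HasCrown E) (hdeg : ∀ u : V, deg E u ≤ 5) :
    2 * (∑ v ∈ univ, (deg E v : ℚ)) ≤ 9 * (Fintype.card V : ℚ) := by
  classical
  have key : ((univ.filter (fun v => deg E v = 5)).card : ℚ) ≤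
      ((univ.filter (fun v => deg E v = 4)).card : ℚ) +
      ∑ u ∈ univ.filter (fun v => deg E v ≤ 3), (9 - 2 * (deg E u : ℚ)) := by
    have hsplit := Finset.card_filter_add_card_filter_not
      (s := univ.filter (fun v : V => deg E v = 5))
      (p := fun v => ((Nbr E v).filter (fun u => deg E u ≤ 3)).card = 0)
    have h1 := cardC hlin hcf hdeg
    have h2 := cardAB hlin hcf hdeg
    have h1' : (((univ.filter (fun v => deg E v = 5)).filter
        (fun v => ((Nbr E v).filter (fun u => deg E u ≤ 3)).card = 0)).card : ℚ) ≤
        ((univ.filter (fun v => deg E v = 4)).card : ℚ) := by exact_mod_cast h1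
    have hs' : (((univ.filter (fun v => deg E v = 5)).filter
        (fun v => ((Nbr E v).filter (fun u => deg E u ≤ 3)).card = 0)).card : ℚ) +
        (((univ.filter (fun v => deg E v = 5)).filter
        (fun v => ¬ ((Nbr E v).filter (fun u => deg E u ≤ 3)).card = 0)).card : ℚ) =
        ((univ.filter (fun v => deg E v = 5)).card : ℚ) := by exact_mod_cast hsplit
    linarith
  -- split the sum of (9 - 2 deg) over univ
  have hsum : ∑ v ∈ univ, ((9:ℚ) - 2 * (deg E v : ℚ)) =
      (∑ v ∈ univ.filter (fun v => deg E v = 5), ((9:ℚ) - 2 * (deg E v : ℚ))) +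
      ((∑ v ∈ univ.filter (fun v => deg E v = 4), ((9:ℚ) - 2 * (deg E v : ℚ))) +
       (∑ v ∈ (univ.filter (fun v => ¬ deg E v = 5)).filter (fun v => ¬ deg E v = 4),
          ((9:ℚ) - 2 * (deg E v : ℚ)))) := by
    rw [← Finset.sum_filter_add_sum_filter_not univ (fun v => deg E v = 5)]
    congr 1
    rw [← Finset.sum_filter_add_sum_filter_not (univ.filter (fun v => ¬ deg E v = 5))
      (fun v => deg E v = 4)]
    congr 2
    · ext x
      simp only [Finset.mem_filter, Finset.mem_univ, true_and]
      constructor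
      · tauto
      · intro h; exact ⟨by omega, h⟩
  have hL : (univ.filter (fun v => ¬ deg E v = 5)).filter (fun v => ¬ deg E v = 4) =
      univ.filter (fun v => deg E v ≤ 3) := by
    ext x
    simp only [Finset.mem_filter, Finset.mem_univ, true_and]
    have := hdeg x
    omega
  have h5 : ∑ v ∈ univ.filter (fun v => deg E v = 5), ((9:ℚ) - 2 * (deg E v : ℚ)) =
      -(((univ.filter (fun v => deg E v = 5)).card : ℚ)) := by
    rw [Finset.sum_congr rfl (g := fun _ => (-1 : ℚ))
      (fun v hv => by
        have h := (Finset.mem_filter.1 hv).2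
        rw [h]; norm_num)]
    rw [Finset.sum_const, nsmul_eq_mul]
    ring
  have h4 : ∑ v ∈ univ.filter (fun v => deg E v = 4), ((9:ℚ) - 2 * (deg E v : ℚ)) =
      ((univ.filter (fun v => deg E v = 4)).card : ℚ) := by
    rw [Finset.sum_congr rfl (g := fun _ => (1 : ℚ))
      (fun v hv => by
        have h := (Finset.mem_filter.1 hv).2
        rw [h]; norm_num)]
    rw [Finset.sum_const, nsmul_eq_mul]
    ring
  have hfinal : 0 ≤ ∑ v ∈ univ, ((9:ℚ) - 2 * (deg E v : ℚ)) := by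
    rw [hsum, hL, h5, h4]
    linarith
  have hexp : ∑ v ∈ univ, ((9:ℚ) - 2 * (deg E v : ℚ)) =
      9 * (Fintype.card V : ℚ) - 2 * (∑ v ∈ univ, (deg E v : ℚ)) := by
    rw [Finset.sum_sub_distrib, Finset.sum_const, Finset.mul_sum]
    simp [Finset.card_univ, mul_comm]
  rw [hexp] at hfinal
  linarith

theorem stmt_19' (hlin : Linear3 E) (hcf : ¬ HasCrown E) (hdeg : ∀ v : V, deg E v ≤ 5) :
    (E.card : ℚ) ≤ 3 * (Fintype.card V : ℚ) / 2 ∧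
      3 * (E.card : ℚ) / (Fintype.card V : ℚ) ≤ 9 / 2 := by
  have hh := handshake (E := E) hlin
  have hm := main_ineq hlin hcf hdeg
  have hcast : (∑ v ∈ univ, (deg E v : ℚ)) = 3 * (E.card : ℚ) := by
    rw [← Nat.cast_sum, hh]
    push_cast
    ring
  rw [hcast] at hm
  have h1 : (E.card : ℚ) ≤ 3 * (Fintype.card V : ℚ) / 2 := by linarith
  refine ⟨h1, ?_⟩
  by_cases hn : Fintype.card V = 0
  · have hE0 : E.card = 0 := by
      by_contra hE
      have hpos : 0 < E.card := by omega
      obtain ⟨e, he⟩ := Finset.card_pos.1 hpos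
      have h3 := hlin.1 e he
      have : e.card ≤ Fintype.card V := by
        rw [← Finset.card_univ]
        exact Finset.card_le_card (Finset.subset_univ e)
      omega
    rw [hn, hE0]
    norm_num
  · have hn' : (0:ℚ) < (Fintype.card V : ℚ) := by
      exact_mod_cast Nat.pos_of_ne_zero hn
    rw [div_le_iff₀ hn']
    linarith

end CrownProofInternal

theorem stmt_19 {V : Type*} [Fintype V] [DecidableEq V] (E : Finset (Finset V))
    (hlin : Linear3 E) (hcf : ¬ HasCrown E) (hdeg : ∀ v : V, deg E v ≤ 5) :
    (E.card : ℚ) ≤ 3 * (Fintype.card V : ℚ) / 2 ∧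
      3 * (E.card : ℚ) / (Fintype.card V : ℚ) ≤ 9 / 2 := by
  exact stmt_19' hlin hcf hdeg
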